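/- arXiv:2212.11221 — 5 statements merged into one kernel-verified Lean document; each statement's English description precedes it below -/
import Mathlib

section
/- Let d, m ≥ 1, let v⁽¹⁾, …, v⁽ᵐ⁾ be i.i.d. uniformly random points on the unit sphere S^{d−1} ⊆ ℝ^d, and let x⁽¹⁾, …, x⁽ᵐ⁾ be i.i.d. samples from N(0, (1/d)·I_d). Then for every monomial p in the m·d coordinate variables (i.e., a product of nonnegative integer powers of the coordinates of the m vectors), E[p(v⁽¹⁾, …, v⁽ᵐ⁾)] ≤ E[p(x⁽¹⁾, …, x⁽ᵐ⁾)]. -/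
open MeasureTheory Metric ProbabilityTheory

/-- The uniform (rotation-invariant) probability distribution on the unit sphere of `ℝ^d`,
viewed as a measure on the ambient space. -/
noncomputable def uniformSphere (d : ℕ) : Measure (EuclideanSpace ℝ (Fin d)) :=
  ((volume : Measure (EuclideanSpace ℝ (Fin d))).toSphere Set.univ)⁻¹ •
    Measure.map Subtype.val ((volume : Measure (EuclideanSpace ℝ (Fin d))).toSphere)

/-- The Gaussian distribution `N(0, (1/d)·I_d)` on `ℝ^d`. -/
noncomputable def scaledGaussian (d : ℕ) : Measure (EuclideanSpace ℝ (Fin d)) :=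
  Measure.map (MeasurableEquiv.toLp 2 (Fin d → ℝ))
    (Measure.pi fun _ : Fin d => gaussianReal 0 (d : NNReal)⁻¹)


open Set
open scoped Real NNReal ENNReal

lemma my_integral_pi_prod {ι : Type*} [Fintype ι] {α : Type*} [MeasurableSpace α]
    (μ : Measure α) [SigmaFinite μ] (f : ι → α → ℝ) :
    ∫ x : ι → α, ∏ i, f i (x i) ∂(Measure.pi fun _ => μ) = ∏ i, ∫ x, f i x ∂μ := by
  letI : MeasureSpace α := ⟨μ⟩
  exact MeasureTheory.integral_fintype_prod_eq_prod f

noncomputable def Jd (d k : ℕ) : ℝ := ∫ r in Ioi (0:ℝ), r ^ k * Real.exp (-((d:ℝ)/2 * r ^ 2))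

lemma Jd_eq (d k : ℕ) (hd : 1 ≤ d) :
    Jd d k = (1/2) * (2/(d:ℝ)) ^ (((k:ℝ)+1)/2) * Real.Gamma (((k:ℝ)+1)/2) := by
  have hd0 : (0:ℝ) < d := by exact_mod_cast hd
  set a : ℝ := ((k:ℝ)+1)/2 with ha_def
  have ha : 0 < a := by positivity
  have hb : (0:ℝ) < (d:ℝ)/2 := by positivity
  have h1 := integral_comp_rpow_Ioi
    (fun y => y ^ (a - 1) * Real.exp (-((d:ℝ)/2 * y))) (p := (2:ℝ)) two_ne_zero
  have h2 : ∀ x ∈ Ioi (0:ℝ),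
      (|(2:ℝ)| * x ^ ((2:ℝ) - 1)) •
        ((x ^ (2:ℝ)) ^ (a - 1) * Real.exp (-((d:ℝ)/2 * x ^ (2:ℝ)))) =
      2 * (x ^ k * Real.exp (-((d:ℝ)/2 * x ^ 2))) := by
    intro x hx
    have hx0 : (0:ℝ) < x := hx
    have h2a : x ^ ((2:ℝ)) = x ^ (2:ℕ) := by
      rw [← Real.rpow_natCast x 2]; norm_num
    have h21 : ((2:ℝ) - 1) = 1 := by norm_num
    rw [h21, Real.rpow_one, abs_of_pos (by norm_num : (0:ℝ) < 2), h2a]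
    have hpow : (x ^ (2:ℕ)) ^ (a - 1) = x ^ ((k:ℝ) - 1) := by
      rw [← Real.rpow_natCast x 2, ← Real.rpow_mul hx0.le]
      congr 1
      rw [ha_def]; push_cast; ring
    rw [hpow]
    have hxk : x * x ^ ((k:ℝ) - 1) = x ^ k := by
      rw [Real.rpow_sub hx0, Real.rpow_one, ← Real.rpow_natCast x k]
      field_simp
    rw [smul_eq_mul, mul_assoc, ← mul_assoc x _ _, hxk]
  rw [setIntegral_congr_fun measurableSet_Ioi h2] at h1
  rw [integral_const_mul] at h1
  beta_reduce at h1
  rw [Real.integral_rpow_mul_exp_neg_mul_Ioi ha hb] at h1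
  have hJ : Jd d k = (1/2) * ((1/((d:ℝ)/2)) ^ a * Real.Gamma a) := by
    rw [Jd, ← h1]; ring
  rw [hJ]
  have h2d : (1/((d:ℝ)/2)) = 2/(d:ℝ) := by field_simp
  rw [h2d]; ring

lemma Jd_pos (d k : ℕ) (hd : 1 ≤ d) : 0 < Jd d k := by
  have hd0 : (0:ℝ) < d := by exact_mod_cast hd
  rw [Jd_eq d k hd]
  have ha : (0:ℝ) < ((k:ℝ)+1)/2 := by positivity
  have := Real.Gamma_pos_of_pos ha
  positivity

lemma Jd_step (d k : ℕ) (hd : 1 ≤ d) : Jd d (k+2) = (((k:ℝ)+1)/d) * Jd d k := by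
  have hd0 : (0:ℝ) < d := by exact_mod_cast hd
  rw [Jd_eq d (k+2) hd, Jd_eq d k hd]
  set a : ℝ := ((k:ℝ)+1)/2 with ha_def
  have ha : 0 < a := by positivity
  have h1 : (((k+2:ℕ):ℝ)+1)/2 = a + 1 := by rw [ha_def]; push_cast; ring
  rw [h1, Real.Gamma_add_one ha.ne', Real.rpow_add (by positivity : (0:ℝ) < 2/(d:ℝ)),
    Real.rpow_one]
  have hk : (k:ℝ) + 1 = 2*a := by rw [ha_def]; ring
  rw [hk]
  field_simp

lemma Jd_even_ge (d n : ℕ) (hd : 1 ≤ d) (hn : Even n) : Jd d (d-1) ≤ Jd d (n + d - 1) := by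
  obtain ⟨j, rfl⟩ : ∃ j, n = 2*j := by obtain ⟨j, hj⟩ := hn; exact ⟨j, by omega⟩
  induction j with
  | zero => simp
  | succ j ih =>
    have hd0 : (0:ℝ) < d := by exact_mod_cast hd
    have h1 : 2*(j+1) + d - 1 = (2*j + d - 1) + 2 := by omega
    rw [h1, Jd_step d _ hd]
    have hpos := Jd_pos d (2*j+d-1) hd
    have hcast : ((2*j + d - 1 : ℕ):ℝ) + 1 = 2*(j:ℝ) + d := by
      have : (2*j + d - 1 : ℕ) = 2*j + (d - 1) := by omega
      rw [this]
      push_cast [Nat.cast_sub hd]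
      ring
    have hratio : 1 ≤ (((2*j + d - 1 : ℕ):ℝ) + 1)/d := by
      rw [hcast, le_div_iff₀ hd0]
      have : (0:ℝ) ≤ (j:ℝ) := Nat.cast_nonneg j
      linarith
    calc Jd d (d-1) ≤ Jd d (2*j + d - 1) := ih (even_two_mul j)
      _ ≤ (((2*j + d - 1 : ℕ):ℝ) + 1)/d * Jd d (2*j + d - 1) := by nlinarith
      _ = _ := by norm_num

lemma integral_gaussianReal_eq (v : ℝ≥0) (hv : v ≠ 0) (g : ℝ → ℝ) :
    ∫ t, g t ∂(gaussianReal 0 v) = ∫ t, gaussianPDFReal 0 v t * g t := by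
  rw [gaussianReal_of_var_ne_zero _ hv, gaussianPDF_def]
  simp only [ENNReal.ofReal]
  rw [integral_withDensity_eq_integral_smul ((measurable_gaussianPDFReal 0 v).real_toNNReal) g]
  congr 1; funext t
  rw [NNReal.smul_def, Real.coe_toNNReal _ (gaussianPDFReal_nonneg 0 v t), smul_eq_mul]

lemma gaussian_odd_moment (v : ℝ≥0) {j : ℕ} (hj : Odd j) :
    ∫ t, t ^ j ∂(gaussianReal 0 v) = 0 := by
  have hone : (⟨(-1:ℝ)^2, sq_nonneg _⟩ : ℝ≥0) = 1 := by
    ext; norm_num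
  have hmap : (gaussianReal 0 v).map (fun t => (-1) * t) = gaussianReal 0 v := by
    have h := gaussianReal_map_const_mul (μ := 0) (v := v) (-1)
    rw [show (NNReal.mk ((-1:ℝ)^2) (sq_nonneg _)) = 1 by ext; norm_num] at h
    simpa using h
  have h2 : ∫ t, t ^ j ∂(gaussianReal 0 v) = ∫ t, ((-1) * t) ^ j ∂(gaussianReal 0 v) := by
    conv_lhs => rw [← hmap]
    rw [integral_map ((measurable_const_mul (-1:ℝ)).aemeasurable) (by fun_prop)]
  simp only [neg_one_mul, hj.neg_pow, integral_neg] at h2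
  linarith

lemma integral_volumeIoiPow (kk : ℕ) (h : ℝ → ℝ) :
    ∫ x : Ioi (0:ℝ), h x.1 ∂(Measure.volumeIoiPow kk) =
      ∫ r in Ioi (0:ℝ), r ^ kk * h r := by
  simp only [Measure.volumeIoiPow, ENNReal.ofReal]
  rw [integral_withDensity_eq_integral_smul
    ((measurable_subtype_coe.pow_const _).real_toNNReal) (fun x => h x.1)]
  rw [integral_subtype_comap measurableSet_Ioi (fun r : ℝ => (r ^ kk).toNNReal • h r)]
  refine setIntegral_congr_fun measurableSet_Ioi (fun r hr => ?_)
  rw [NNReal.smul_def, Real.coe_toNNReal _ (pow_nonneg (le_of_lt hr) _), smul_eq_mul]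

lemma volume_polar (d : ℕ) (hd : 1 ≤ d) (e : Fin d → ℕ) (w : ℝ → ℝ) :
    ∫ x : EuclideanSpace ℝ (Fin d), (∏ k, x k ^ e k) * w ‖x‖ =
      (∫ v : sphere (0:EuclideanSpace ℝ (Fin d)) 1,
          ∏ k, ((v : EuclideanSpace ℝ (Fin d)) k) ^ e k
          ∂((volume : Measure (EuclideanSpace ℝ (Fin d))).toSphere)) *
      ∫ r in Ioi (0:ℝ), r ^ (∑ k, e k + d - 1) * w r := by
  set M := EuclideanSpace ℝ (Fin d)
  set n := ∑ k, e k with hn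
  haveI : Nonempty (Fin d) := ⟨⟨0, hd⟩⟩
  haveI : Nontrivial M := inferInstance
  have key : ∀ (c : ℝ) (y : M), ∏ k, (c * y k) ^ e k = c ^ n * ∏ k, y k ^ e k := by
    intro c y
    simp only [mul_pow, Finset.prod_mul_distrib, Finset.prod_pow_eq_pow_sum]
    rfl
  have hfr : Module.finrank ℝ M = d := finrank_euclideanSpace_fin
  have G := (volume : Measure M).measurePreserving_homeomorphUnitSphereProd
  set F : sphere (0:M) 1 × Ioi (0:ℝ) → ℝ :=
    fun p => (∏ k, ((p.1 : M) k) ^ e k) * ((p.2 : ℝ) ^ n * w (p.2 : ℝ)) with hF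
  calc ∫ x : M, (∏ k, x k ^ e k) * w ‖x‖
      = ∫ x : ({(0:M)}ᶜ : Set M), (∏ k, (x.1 : M) k ^ e k) * w ‖x.1‖
          ∂((volume : Measure M).comap Subtype.val) := by
        rw [integral_subtype_comap (measurableSet_singleton (0:M)).compl
          (fun x : M => (∏ k, x k ^ e k) * w ‖x‖), MeasureTheory.restrict_compl_singleton]
    _ = ∫ p, F p ∂((volume : Measure M).toSphere.prod
          (Measure.volumeIoiPow (Module.finrank ℝ M - 1))) := by
        rw [← G.integral_comp (Homeomorph.measurableEmbedding _) F]
        refine integral_congr_ae (ae_of_all _ fun x => ?_)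
        have hx : (x.1 : M) ≠ 0 := x.2
        have hx0 : ‖(x.1 : M)‖ ≠ 0 := norm_ne_zero_iff.2 hx
        show (∏ k, (x.1 : M) k ^ e k) * w ‖(x.1 : M)‖ = F (homeomorphUnitSphereProd M x)
        have h2 : F (homeomorphUnitSphereProd M x) =
            (‖(x.1 : M)‖⁻¹ ^ n * ∏ k, (x.1 : M) k ^ e k) * (‖(x.1 : M)‖ ^ n * w ‖(x.1 : M)‖) := by
          rw [hF]
          simp only [homeomorphUnitSphereProd_apply_fst_coe,
            homeomorphUnitSphereProd_apply_snd_coe]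
          rw [show (∏ k, ((‖(x.1 : M)‖⁻¹ • (x.1 : M) : M)) k ^ e k)
              = ∏ k, (‖(x.1 : M)‖⁻¹ * (x.1 : M) k) ^ e k from rfl, key]
        rw [h2, inv_pow]
        field_simp
    _ = (∫ v : sphere (0:M) 1, ∏ k, ((v : M) k) ^ e k ∂((volume : Measure M).toSphere)) *
          ∫ r : Ioi (0:ℝ), ((r : ℝ) ^ n * w (r : ℝ)) ∂(Measure.volumeIoiPow (d - 1)) := by
        rw [hfr]
        exact integral_prod_mul (fun v : sphere (0:M) 1 => ∏ k, ((v : M) k) ^ e k)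
          (fun r : Ioi (0:ℝ) => (r : ℝ) ^ n * w (r : ℝ))
    _ = _ := by
        rw [integral_volumeIoiPow (d-1) (fun r => r ^ n * w r)]
        congr 1
        refine setIntegral_congr_fun measurableSet_Ioi (fun r hr => ?_)
        rw [← mul_assoc, ← pow_add]
        congr 2
        omega

noncomputable def Sph (d : ℕ) (e : Fin d → ℕ) : ℝ :=
  ∫ v : sphere (0:EuclideanSpace ℝ (Fin d)) 1, ∏ k, ((v : EuclideanSpace ℝ (Fin d)) k) ^ e k
    ∂((volume : Measure (EuclideanSpace ℝ (Fin d))).toSphere)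

noncomputable def cd (d : ℕ) : ℝ := ((Real.sqrt (2 * π * ((d:ℝ))⁻¹))⁻¹) ^ d

lemma mono_continuous (d : ℕ) (e : Fin d → ℕ) :
    Continuous fun x : EuclideanSpace ℝ (Fin d) => ∏ k, x k ^ e k :=
  continuous_finset_prod _ (fun k _ => ((EuclideanSpace.proj k).continuous).pow _)

lemma gauss_prod (d : ℕ) (hd : 1 ≤ d) (e : Fin d → ℕ) :
    ∫ x, ∏ k, x k ^ e k ∂(scaledGaussian d)
      = ∏ k, ∫ t, t ^ e k ∂(gaussianReal 0 (d:ℝ≥0)⁻¹) := by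
  rw [scaledGaussian, integral_map
    ((MeasurableEquiv.toLp 2 (Fin d → ℝ)).measurable.aemeasurable)
    ((mono_continuous d e).aestronglyMeasurable)]
  exact my_integral_pi_prod (gaussianReal 0 (d:ℝ≥0)⁻¹) (fun k t => t ^ e k)

lemma scaledGaussian_prob (d : ℕ) : IsProbabilityMeasure (scaledGaussian d) := by
  rw [scaledGaussian]
  exact Measure.isProbabilityMeasure_map
    ((MeasurableEquiv.toLp 2 (Fin d → ℝ)).measurable.aemeasurable)

lemma gauss_eq_weighted (d : ℕ) (hd : 1 ≤ d) (e : Fin d → ℕ) :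
    ∫ x, ∏ k, x k ^ e k ∂(scaledGaussian d)
      = ∫ x : EuclideanSpace ℝ (Fin d),
          (∏ k, x k ^ e k) * (cd d * Real.exp (-((d:ℝ)/2 * ‖x‖^2))) := by
  have hd0 : (0:ℝ) < d := by exact_mod_cast hd
  have hv : ((d:ℝ≥0))⁻¹ ≠ 0 := inv_ne_zero (Nat.cast_ne_zero.mpr (by omega))
  rw [gauss_prod d hd e]
  have h1 : ∀ k : Fin d, ∫ t, t ^ e k ∂(gaussianReal 0 (d:ℝ≥0)⁻¹)
      = ∫ t, gaussianPDFReal 0 (d:ℝ≥0)⁻¹ t * t ^ e k :=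
    fun k => integral_gaussianReal_eq _ hv _
  simp_rw [h1]
  have hpt : ∀ x : EuclideanSpace ℝ (Fin d),
      ∏ k, gaussianPDFReal 0 (d:ℝ≥0)⁻¹ (x k) * (x k) ^ e k
        = (∏ k, x k ^ e k) * (cd d * Real.exp (-((d:ℝ)/2 * ‖x‖^2))) := by
    intro x
    have hpdf : ∀ t : ℝ, gaussianPDFReal 0 (d:ℝ≥0)⁻¹ t
        = (Real.sqrt (2 * π * ((d:ℝ))⁻¹))⁻¹ * Real.exp (-((d:ℝ)/2 * t^2)) := by
      intro t
      rw [gaussianPDFReal]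
      push_cast
      congr 1
      rw [sub_zero]
      congr 1
      field_simp
    have hnorm : ‖x‖^2 = ∑ k, x k ^ 2 := by
      rw [EuclideanSpace.norm_eq, Real.sq_sqrt (by positivity)]
      simp [Real.norm_eq_abs, sq_abs]
    rw [Finset.prod_mul_distrib]
    simp_rw [hpdf]
    rw [Finset.prod_mul_distrib, Finset.prod_const]
    rw [Finset.card_univ, Fintype.card_fin, ← Real.exp_sum]
    rw [show ∑ k, -((d:ℝ)/2 * x k ^ 2) = -((d:ℝ)/2 * ‖x‖^2) by
      rw [hnorm, Finset.mul_sum, ← Finset.sum_neg_distrib]]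
    rw [cd]
    ring
  calc ∏ k, ∫ t, gaussianPDFReal 0 (d:ℝ≥0)⁻¹ t * t ^ e k
      = ∫ y : Fin d → ℝ, ∏ k, gaussianPDFReal 0 (d:ℝ≥0)⁻¹ (y k) * (y k) ^ e k
          ∂(Measure.pi fun _ => (volume : Measure ℝ)) :=
        (my_integral_pi_prod (volume : Measure ℝ)
          (fun k t => gaussianPDFReal 0 (d:ℝ≥0)⁻¹ t * t ^ e k)).symm
    _ = ∫ x : EuclideanSpace ℝ (Fin d),
          ∏ k, gaussianPDFReal 0 (d:ℝ≥0)⁻¹ (x k) * (x k) ^ e k := by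
        rw [← MeasureTheory.volume_pi]
        exact ((EuclideanSpace.volume_preserving_symm_measurableEquiv_toLp (Fin d)).integral_comp
          (MeasurableEquiv.toLp 2 (Fin d → ℝ)).symm.measurableEmbedding
          (fun y : Fin d → ℝ =>
            ∏ k, gaussianPDFReal 0 (d:ℝ≥0)⁻¹ (y k) * (y k) ^ e k)).symm
    _ = ∫ x : EuclideanSpace ℝ (Fin d),
          (∏ k, x k ^ e k) * (cd d * Real.exp (-((d:ℝ)/2 * ‖x‖^2))) :=
        integral_congr_ae (ae_of_all _ hpt)

lemma gauss_eq_cSJ (d : ℕ) (hd : 1 ≤ d) (e : Fin d → ℕ) :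
    ∫ x, ∏ k, x k ^ e k ∂(scaledGaussian d)
      = cd d * Sph d e * Jd d (∑ k, e k + d - 1) := by
  rw [gauss_eq_weighted d hd e,
    volume_polar d hd e (fun r => cd d * Real.exp (-((d:ℝ)/2 * r^2)))]
  rw [show (fun r : ℝ => r ^ (∑ k, e k + d - 1) * (cd d * Real.exp (-((d:ℝ)/2 * r^2))))
      = fun r : ℝ => cd d * (r ^ (∑ k, e k + d - 1) * Real.exp (-((d:ℝ)/2 * r^2)))
    from funext fun r => by ring]
  rw [integral_const_mul, Jd, Sph]
  ring
noncomputable def Td (d : ℕ) : ℝ :=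
  ((volume : Measure (EuclideanSpace ℝ (Fin d))).toSphere Set.univ).toReal

lemma toSphere_univ_ne_zero (d : ℕ) (hd : 1 ≤ d) :
    (volume : Measure (EuclideanSpace ℝ (Fin d))).toSphere Set.univ ≠ 0 := by
  haveI : Nonempty (Fin d) := ⟨⟨0, hd⟩⟩
  rw [Measure.toSphere_apply_univ]
  refine mul_ne_zero ?_ ?_
  · simp [finrank_euclideanSpace_fin]
    omega
  · exact (measure_ball_pos _ _ one_pos).ne'

lemma toSphere_univ_ne_top (d : ℕ) :
    (volume : Measure (EuclideanSpace ℝ (Fin d))).toSphere Set.univ ≠ ⊤ :=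
  measure_ne_top _ _

lemma Td_pos (d : ℕ) (hd : 1 ≤ d) : 0 < Td d :=
  ENNReal.toReal_pos (toSphere_univ_ne_zero d hd) (toSphere_univ_ne_top d)

lemma uniformSphere_prob (d : ℕ) (hd : 1 ≤ d) : IsProbabilityMeasure (uniformSphere d) := by
  constructor
  rw [uniformSphere, Measure.smul_apply, Measure.map_apply measurable_subtype_coe .univ,
    Set.preimage_univ, smul_eq_mul,
    ENNReal.inv_mul_cancel (toSphere_univ_ne_zero d hd) (toSphere_univ_ne_top d)]

lemma uniform_eq (d : ℕ) (e : Fin d → ℕ) :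
    ∫ x, ∏ k, x k ^ e k ∂(uniformSphere d) = (Td d)⁻¹ * Sph d e := by
  rw [uniformSphere, integral_smul_measure,
    integral_map measurable_subtype_coe.aemeasurable
      ((mono_continuous d e).aestronglyMeasurable), ENNReal.toReal_inv]
  rfl

lemma Sph_zero (d : ℕ) : Sph d (fun _ => 0) = Td d := by
  rw [Sph]
  simp [Td]
  exact Or.inl rfl

lemma normalization (d : ℕ) (hd : 1 ≤ d) : cd d * Td d * Jd d (d - 1) = 1 := by
  haveI := scaledGaussian_prob d
  have h := gauss_eq_cSJ d hd (fun _ => 0)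
  simp only [pow_zero, Finset.prod_const_one, Finset.sum_const_zero, Nat.zero_add,
    integral_const, probReal_univ, ENNReal.toReal_one, one_smul, smul_eq_mul, mul_one] at h
  rw [Sph_zero] at h
  linarith [h]

lemma gauss_eq_uniform_mul (d : ℕ) (hd : 1 ≤ d) (e : Fin d → ℕ) :
    ∫ x, ∏ k, x k ^ e k ∂(scaledGaussian d)
      = (∫ x, ∏ k, x k ^ e k ∂(uniformSphere d))
          * (Jd d (∑ k, e k + d - 1) / Jd d (d - 1)) := by
  have hT := Td_pos d hd
  have hJ := Jd_pos d (d-1) hd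
  have hS : Sph d e = Td d * ∫ x, ∏ k, x k ^ e k ∂(uniformSphere d) := by
    rw [uniform_eq d e]
    field_simp
  rw [gauss_eq_cSJ d hd e, hS]
  have hnorm := normalization d hd
  field_simp
  linear_combination ((∫ x, ∏ k, x k ^ e k ∂(uniformSphere d)) *
    Jd d (∑ k, e k + d - 1)) * hnorm

lemma main_single (d : ℕ) (hd : 1 ≤ d) (e : Fin d → ℕ) :
    0 ≤ (∫ x, ∏ k, x k ^ e k ∂(uniformSphere d)) ∧
      (∫ x, ∏ k, x k ^ e k ∂(uniformSphere d)) ≤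
        ∫ x, ∏ k, x k ^ e k ∂(scaledGaussian d) := by
  have hGU := gauss_eq_uniform_mul d hd e
  have hJd := Jd_pos d (d-1) hd
  have hJn := Jd_pos d (∑ k, e k + d - 1) hd
  by_cases hall : ∀ k, Even (e k)
  · have hU0 : 0 ≤ ∫ x, ∏ k, x k ^ e k ∂(uniformSphere d) :=
      integral_nonneg fun v => Finset.prod_nonneg fun k _ => (hall k).pow_nonneg _
    have hn : Even (∑ k, e k) := Finset.even_sum _ (fun k _ => hall k)
    have hratio : 1 ≤ Jd d (∑ k, e k + d - 1) / Jd d (d - 1) :=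
      (one_le_div hJd).mpr (Jd_even_ge d _ hd hn)
    exact ⟨hU0, by rw [hGU]; exact le_mul_of_one_le_right hU0 hratio⟩
  · push_neg at hall
    obtain ⟨k, hk⟩ := hall
    have hodd : Odd (e k) := Nat.not_even_iff_odd.mp hk
    have hv : ((d:ℝ≥0))⁻¹ ≠ 0 := inv_ne_zero (Nat.cast_ne_zero.mpr (by omega))
    have hG0 : ∫ x, ∏ k, x k ^ e k ∂(scaledGaussian d) = 0 := by
      rw [gauss_prod d hd e]
      exact Finset.prod_eq_zero (Finset.mem_univ k) (gaussian_odd_moment _ hodd)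
    have hU0 : ∫ x, ∏ k, x k ^ e k ∂(uniformSphere d) = 0 := by
      rw [hG0] at hGU
      rcases mul_eq_zero.mp hGU.symm with h | h
      · exact h
      · exact absurd h (div_pos hJn hJd).ne'
    rw [hU0, hG0]
    exact ⟨le_refl 0, le_refl 0⟩

/-- For i.i.d. uniform sphere points `v⁽¹⁾,…,v⁽ᵐ⁾` and i.i.d. `x⁽¹⁾,…,x⁽ᵐ⁾ ∼ N(0,(1/d)I_d)`,
every monomial `p` (given by exponents `e i k` on the `k`-th coordinate of the `i`-th vector)
satisfies `E[p(v⁽¹⁾,…,v⁽ᵐ⁾)] ≤ E[p(x⁽¹⁾,…,x⁽ᵐ⁾)]`. -/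
theorem sphere_monomial_le_gaussian_monomial (d m : ℕ) (hd : 1 ≤ d) (hm : 1 ≤ m)
    (e : Fin m → Fin d → ℕ) :
    (∫ v : Fin m → EuclideanSpace ℝ (Fin d), ∏ i, ∏ k, (v i k) ^ (e i k)
        ∂(Measure.pi fun _ : Fin m => uniformSphere d)) ≤
    (∫ x : Fin m → EuclideanSpace ℝ (Fin d), ∏ i, ∏ k, (x i k) ^ (e i k)
        ∂(Measure.pi fun _ : Fin m => scaledGaussian d)) := by
  haveI := uniformSphere_prob d hd
  haveI := scaledGaussian_prob d
  have hL : (∫ v : Fin m → EuclideanSpace ℝ (Fin d), ∏ i, ∏ k, (v i k) ^ (e i k)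
        ∂(Measure.pi fun _ : Fin m => uniformSphere d))
      = ∏ i, ∫ x, ∏ k, x k ^ e i k ∂(uniformSphere d) :=
    my_integral_pi_prod (uniformSphere d) (fun i x => ∏ k, x k ^ e i k)
  have hR : (∫ x : Fin m → EuclideanSpace ℝ (Fin d), ∏ i, ∏ k, (x i k) ^ (e i k)
        ∂(Measure.pi fun _ : Fin m => scaledGaussian d))
      = ∏ i, ∫ x, ∏ k, x k ^ e i k ∂(scaledGaussian d) :=
    my_integral_pi_prod (scaledGaussian d) (fun i x => ∏ k, x k ^ e i k)
  rw [hL, hR]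
  exact Finset.prod_le_prod (fun i _ => (main_single d hd (e i)).1)
    (fun i _ => (main_single d hd (e i)).2)
end

section
/- Let d ≥ 6 and m ≥ 1, let A be a symmetric m×m real matrix with operator norm ‖A‖₂ ≤ 1/2, and set M = (1/d)·𝟙𝟙ᵀ + (1 − 1/d)·I_m + A, where 𝟙 ∈ ℝ^m is the all-ones vector. Then ‖M^{−1}𝟙 − (d/m)·𝟙‖₂ ≤ 9·d/√m, where ‖·‖₂ on vectors denotes the Euclidean norm. -/
open MeasureTheory ProbabilityTheory

/-- The operator (spectral) norm of a real matrix, i.e. the `ℓ² → ℓ²` operator norm. -/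
noncomputable def opNorm {n : ℕ} (A : Matrix (Fin n) (Fin n) ℝ) : ℝ :=
  ‖LinearMap.toContinuousLinearMap (Matrix.toEuclideanLin A)‖

/-- For `d ≥ 6`, `m ≥ 1`, a symmetric `A` with `‖A‖₂ ≤ 1/2`, and
`M = (1/d)·𝟙𝟙ᵀ + (1 − 1/d)·I + A`, the vector `M⁻¹𝟙` satisfies
`‖M⁻¹𝟙 − (d/m)·𝟙‖₂ ≤ 9·d/√m`. -/
theorem M_inv_ones_close (d m : ℕ) (hd : 6 ≤ d) (hm : 1 ≤ m)
    (A : Matrix (Fin m) (Fin m) ℝ) (hA : A.IsSymm) (hAnorm : opNorm A ≤ 1 / 2)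
    (M : Matrix (Fin m) (Fin m) ℝ)
    (hM : M = (1 / (d : ℝ)) • Matrix.of (fun _ _ : Fin m => (1 : ℝ))
        + (1 - 1 / (d : ℝ)) • (1 : Matrix (Fin m) (Fin m) ℝ) + A) :
    Real.sqrt (∑ i, (M⁻¹.mulVec (fun _ => 1) i - (d : ℝ) / (m : ℝ)) ^ 2) ≤
      9 * (d : ℝ) / Real.sqrt m := by
  have hm0 : (0:ℝ) < m := by exact_mod_cast hm
  have hd6 : (6:ℝ) ≤ d := by exact_mod_cast hd
  have hd0 : (0:ℝ) < d := by linarith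
  have normsq : ∀ w : EuclideanSpace ℝ (Fin m), ‖w‖^2 = ∑ i, w i ^ 2 := by
    intro w; rw [EuclideanSpace.norm_eq, Real.sq_sqrt (by positivity)]; simp [sq_abs]
  have innersum : ∀ w y : EuclideanSpace ℝ (Fin m), (inner ℝ w y : ℝ) = ∑ i, w i * y i := by
    intro w y; simp [PiLp.inner_apply, RCLike.inner_apply, mul_comm]
  have hAv : ∀ w : EuclideanSpace ℝ (Fin m), ‖(WithLp.toLp 2 (A.mulVec w) : EuclideanSpace ℝ (Fin m))‖ ≤ 1/2 * ‖w‖ := by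
    intro w
    calc ‖(WithLp.toLp 2 (A.mulVec w) : EuclideanSpace ℝ (Fin m))‖ ≤ opNorm A * ‖w‖ :=
          (LinearMap.toContinuousLinearMap (Matrix.toEuclideanLin A)).le_opNorm w
      _ ≤ 1/2 * ‖w‖ := mul_le_mul_of_nonneg_right hAnorm (norm_nonneg w)
  have hMv : ∀ w : Fin m → ℝ, M.mulVec w =
      fun i => (1/(d:ℝ)) * (∑ j, w j) + (1 - 1/(d:ℝ)) * w i + A.mulVec w i := by
    intro w
    subst hM
    funext i
    rw [Matrix.add_mulVec, Matrix.add_mulVec, Matrix.smul_mulVec,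
      Matrix.smul_mulVec, Matrix.one_mulVec]
    simp only [Pi.add_apply, Pi.smul_apply, smul_eq_mul]
    have hJ : (Matrix.of fun _ _ : Fin m => (1:ℝ)).mulVec w i = ∑ j, w j := by
      simp [Matrix.mulVec, dotProduct]
    rw [hJ]
  have quad : ∀ w : EuclideanSpace ℝ (Fin m), (1/3:ℝ) * ‖w‖^2 ≤ inner ℝ w (WithLp.toLp 2 (M.mulVec w) : EuclideanSpace ℝ (Fin m)) := by
    intro w
    have hAq : |(inner ℝ w (WithLp.toLp 2 (A.mulVec w) : EuclideanSpace ℝ (Fin m)) : ℝ)| ≤ 1/2 * ‖w‖^2 := by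
      calc |(inner ℝ w (WithLp.toLp 2 (A.mulVec w) : EuclideanSpace ℝ (Fin m)) : ℝ)| ≤ ‖w‖ * ‖(WithLp.toLp 2 (A.mulVec w) : EuclideanSpace ℝ (Fin m))‖ :=
            abs_real_inner_le_norm _ _
        _ ≤ ‖w‖ * (1/2 * ‖w‖) := mul_le_mul_of_nonneg_left (hAv w) (norm_nonneg w)
        _ = 1/2 * ‖w‖^2 := by ring
    have hinner : (inner ℝ w (WithLp.toLp 2 (M.mulVec w) : EuclideanSpace ℝ (Fin m)) : ℝ)
        = (1/(d:ℝ)) * (∑ j, w j)^2 + (1 - 1/(d:ℝ)) * (∑ i, w i^2)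
          + (inner ℝ w (WithLp.toLp 2 (A.mulVec w) : EuclideanSpace ℝ (Fin m)) : ℝ) := by
      rw [innersum, innersum]
      simp only [hMv]
      rw [Finset.sum_congr rfl (fun i _ => mul_add (w i) _ _),
        Finset.sum_congr rfl (fun i _ => congrArg (· + _) (mul_add (w i) _ _))]
      rw [Finset.sum_add_distrib, Finset.sum_add_distrib]
      have h1 : ∑ i, w i * ((1/(d:ℝ)) * ∑ j, w j) = (1/(d:ℝ)) * (∑ j, w j)^2 := by
        rw [← Finset.sum_mul]; ring
      have h2 : ∑ i, w i * ((1 - 1/(d:ℝ)) * w i) = (1 - 1/(d:ℝ)) * ∑ i, w i^2 := by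
        rw [Finset.mul_sum]; apply Finset.sum_congr rfl; intro i _; ring
      rw [h1, h2]
    rw [hinner, normsq]
    have hsq : (0:ℝ) ≤ (∑ j, w j)^2 := sq_nonneg _
    have hds : (1/(d:ℝ)) ≤ 1/6 := by
      apply one_div_le_one_div_of_le <;> linarith
    have hd0' : (0:ℝ) < 1/(d:ℝ) := by positivity
    have habs := abs_le.mp hAq
    have hw2 : (0:ℝ) ≤ ∑ i, w i^2 := by positivity
    rw [normsq] at habs
    nlinarith [habs.1]
  have key : ∀ w : EuclideanSpace ℝ (Fin m), ‖w‖ ≤ 3 * ‖(WithLp.toLp 2 (M.mulVec w) : EuclideanSpace ℝ (Fin m))‖ := by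
    intro w
    have h1 := quad w
    have h2 := real_inner_le_norm w (WithLp.toLp 2 (M.mulVec w) : EuclideanSpace ℝ (Fin m))
    nlinarith [norm_nonneg w, norm_nonneg (WithLp.toLp 2 (M.mulVec w) : EuclideanSpace ℝ (Fin m))]
  -- invertibility
  have hinj : Function.Injective M.mulVec := by
    intro w1 w2 h
    have h0 : M.mulVec (w1 - w2) = 0 := by
      rw [Matrix.mulVec_sub, h, sub_self]
    have hk := key (WithLp.toLp 2 (w1 - w2) : EuclideanSpace ℝ (Fin m))
    have h3 : (WithLp.toLp 2 (M.mulVec (w1 - w2)) : EuclideanSpace ℝ (Fin m)) = (0:EuclideanSpace ℝ (Fin m)) := by rw [h0]; rfl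
    rw [h3, norm_zero, mul_zero] at hk
    have : (WithLp.toLp 2 (w1 - w2) : EuclideanSpace ℝ (Fin m)) = 0 := norm_le_zero_iff.mp hk
    exact sub_eq_zero.mp (congrArg WithLp.ofLp this)
  have hdet : IsUnit M.det := (Matrix.isUnit_iff_isUnit_det M).mp
    (Matrix.mulVec_injective_iff_isUnit.mp hinj)
  set u : EuclideanSpace ℝ (Fin m) := WithLp.toLp 2 (fun _ => (1:ℝ)) with hu
  set v : EuclideanSpace ℝ (Fin m) := WithLp.toLp 2 (fun _ => (d:ℝ)/m) with hv
  have hMx : M.mulVec (M⁻¹.mulVec u) = u := by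
    rw [Matrix.mulVec_mulVec, Matrix.mul_nonsing_inv M hdet, Matrix.one_mulVec]
  set x : EuclideanSpace ℝ (Fin m) := WithLp.toLp 2 (M⁻¹.mulVec u) with hx
  have hMvv : M.mulVec v = fun i => 1 + (1 - 1/(d:ℝ)) * ((d:ℝ)/m) + A.mulVec v i := by
    rw [hMv]
    funext i
    simp only [hv]
    have : ∑ _j : Fin m, (d:ℝ)/m = m * ((d:ℝ)/m) := by
      rw [Finset.sum_const, Finset.card_univ]; simp [nsmul_eq_mul]
    rw [this]
    have : (1/(d:ℝ)) * ((m:ℝ) * ((d:ℝ)/m)) = 1 := by field_simp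
    rw [this]
  have hw : (WithLp.toLp 2 (M.mulVec (x - v)) : EuclideanSpace ℝ (Fin m))
      = -((1 - 1/(d:ℝ)) • v + (WithLp.toLp 2 (A.mulVec v) : EuclideanSpace ℝ (Fin m))) := by
    have h1 : M.mulVec ((x:Fin m → ℝ) - v) = M.mulVec x - M.mulVec v := Matrix.mulVec_sub M x v
    ext i
    show M.mulVec ((x:Fin m → ℝ) - v) i = _
    rw [h1]
    have hxi : M.mulVec x i = 1 := by rw [hMx]
    have hvi : M.mulVec v i = 1 + (1 - 1/(d:ℝ)) * ((d:ℝ)/m) + A.mulVec v i := by rw [hMvv]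
    show M.mulVec x i - M.mulVec v i = -((1 - 1/(d:ℝ)) * v i + A.mulVec v i)
    rw [hxi, hvi]
    show _ = -((1 - 1/(d:ℝ)) * ((d:ℝ)/m) + A.mulVec v i)
    ring
  have hvnorm : ‖v‖ = (d:ℝ) / Real.sqrt m := by
    have h2 : ‖v‖^2 = (d:ℝ)^2/m := by
      rw [normsq]
      simp only [hv]
      rw [Finset.sum_const, Finset.card_univ]
      simp only [Fintype.card_fin, nsmul_eq_mul]
      field_simp
    have := Real.sqrt_sq (norm_nonneg v)
    rw [← this, h2, Real.sqrt_div (by positivity), Real.sqrt_sq hd0.le]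
  have hrhs : ‖(WithLp.toLp 2 (M.mulVec (x - v)) : EuclideanSpace ℝ (Fin m))‖ ≤ (3/2) * ((d:ℝ)/Real.sqrt m) := by
    rw [hw, norm_neg]
    calc ‖(1 - 1/(d:ℝ)) • v + (WithLp.toLp 2 (A.mulVec v) : EuclideanSpace ℝ (Fin m))‖
        ≤ ‖(1 - 1/(d:ℝ)) • v‖ + ‖(WithLp.toLp 2 (A.mulVec v) : EuclideanSpace ℝ (Fin m))‖ := norm_add_le _ _
      _ ≤ |1 - 1/(d:ℝ)| * ‖v‖ + 1/2 * ‖v‖ := by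
          rw [norm_smul, Real.norm_eq_abs]; exact add_le_add le_rfl (hAv v)
      _ ≤ 1 * ‖v‖ + 1/2 * ‖v‖ := by
          have hdd : |1 - 1/(d:ℝ)| ≤ 1 := by
            rw [abs_le]; constructor
            · have : 1/(d:ℝ) ≤ 1 := by rw [div_le_one hd0]; linarith
              linarith
            · have : (0:ℝ) < 1/(d:ℝ) := by positivity
              linarith
          exact add_le_add (mul_le_mul_of_nonneg_right hdd (norm_nonneg v)) le_rfl
      _ = (3/2) * ‖v‖ := by ring
      _ = (3/2) * ((d:ℝ)/Real.sqrt m) := by rw [hvnorm]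
  have hgoal_eq : Real.sqrt (∑ i, (M⁻¹.mulVec (fun _ => 1) i - (d:ℝ)/m)^2)
      = ‖(show EuclideanSpace ℝ (Fin m) from x - v)‖ := by
    rw [EuclideanSpace.norm_eq]
    congr 1
    apply Finset.sum_congr rfl
    intro i _
    rw [Real.norm_eq_abs, sq_abs]
    rfl
  rw [hgoal_eq]
  have hfinal : ‖(show EuclideanSpace ℝ (Fin m) from x - v)‖ ≤ (9/2) * ((d:ℝ)/Real.sqrt m) := by
    calc ‖(show EuclideanSpace ℝ (Fin m) from x - v)‖ ≤ 3 * ‖(WithLp.toLp 2 (M.mulVec (x - v)) : EuclideanSpace ℝ (Fin m))‖ := key _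
      _ ≤ 3 * ((3/2) * ((d:ℝ)/Real.sqrt m)) := by
          apply mul_le_mul_of_nonneg_left hrhs (by norm_num)
      _ = (9/2) * ((d:ℝ)/Real.sqrt m) := by ring
  have hpos : (0:ℝ) ≤ (d:ℝ)/Real.sqrt m := by positivity
  calc ‖(show EuclideanSpace ℝ (Fin m) from x - v)‖ ≤ (9/2) * ((d:ℝ)/Real.sqrt m) := hfinal
    _ ≤ 9 * ((d:ℝ)/Real.sqrt m) := by nlinarith
    _ = 9 * (d:ℝ) / Real.sqrt m := by ring
end

section
/- For every constant C₀ > 0 there exists d₀ such that for all d ≥ d₀ and all integers m with d ≤ m ≤ d² the following holds. Let M be an m×m real matrix of the form M = (1/d)·𝟙𝟙ᵀ + (1 − 1/d)·I_m + A with A symmetric and ‖A‖₂ ≤ 1/2 (so M is invertible with ‖M^{−1}‖₂ ≤ 3). Let ε₁, …, ε_m be i.i.d. real random variables with |ε₁| ≤ log(d)/√d almost surely and |E[ε₁]| ≤ C₀/d. Then with probability at least 1 − 1/d, every coordinate of δ = M^{−1}ε satisfies |δ_i| ≤ log²(d)/√d. -/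
open MeasureTheory ProbabilityTheory

open Matrix
set_option maxHeartbeats 1000000


lemma aux_chord {b c y : ℝ} (hb : 0 < b) (hy : |y| ≤ b) :
    Real.exp (c * y) ≤ Real.cosh (c * b) + (y / b) * Real.sinh (c * b) := by
  obtain ⟨hy1, hy2⟩ := abs_le.mp hy
  set θ : ℝ := (b + y) / (2 * b) with hθ
  have hθ0 : 0 ≤ θ := div_nonneg (by linarith) (by positivity)
  have hθ1 : 1 - θ ≥ 0 := by
    rw [hθ]; rw [ge_iff_le, sub_nonneg, div_le_one (by positivity)]; linarith
  have key := convexOn_exp.2 (Set.mem_univ (c * b)) (Set.mem_univ (-(c * b)))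
    hθ0 hθ1 (by ring)
  have hyθ : θ • (c * b) + (1 - θ) • (-(c * b)) = c * y := by
    simp only [smul_eq_mul, hθ]
    field_simp
    ring
  rw [hyθ] at key
  refine key.trans (le_of_eq ?_)
  simp only [smul_eq_mul, Real.cosh_eq, Real.sinh_eq, hθ]
  field_simp
  ring

lemma aux_integrable_of_bound (ν : Measure ℝ) [IsFiniteMeasure ν] {f : ℝ → ℝ} {C : ℝ}
    (hf : Measurable f) (h : ∀ᵐ s ∂ν, |f s| ≤ C) : Integrable f ν := by
  refine Integrable.mono' (integrable_const C) hf.aestronglyMeasurable ?_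
  filter_upwards [h] with s hs using by simpa using hs

lemma aux_mgf (ν : Measure ℝ) [IsProbabilityMeasure ν] {b μm : ℝ} (hb : 0 < b)
    (hbd : ∀ᵐ s ∂ν, |s - μm| ≤ b) (hmean : ∫ s, s ∂ν = μm) (c : ℝ) :
    ∫ s, Real.exp (c * s) ∂ν ≤ Real.exp (c * μm + c ^ 2 * b ^ 2 / 2) := by
  have hid : Integrable (fun s : ℝ => s) ν := by
    refine aux_integrable_of_bound ν (C := b + |μm|) measurable_id ?_
    filter_upwards [hbd] with s hs
    calc |s| = |(s - μm) + μm| := by ring_nf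
    _ ≤ |s - μm| + |μm| := abs_add_le _ _
    _ ≤ b + |μm| := by linarith
  have hexp : Integrable (fun s : ℝ => Real.exp (c * s)) ν := by
    refine aux_integrable_of_bound ν (C := Real.exp (|c| * (b + |μm|))) (by fun_prop) ?_
    filter_upwards [hbd] with s hs
    rw [abs_of_nonneg (Real.exp_nonneg _)]
    refine Real.exp_le_exp.mpr ?_
    have h1 : |s| ≤ b + |μm| := by
      calc |s| = |(s - μm) + μm| := by ring_nf
      _ ≤ |s - μm| + |μm| := abs_add_le _ _
      _ ≤ b + |μm| := by linarith
    calc c * s ≤ |c * s| := le_abs_self _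
    _ = |c| * |s| := abs_mul _ _
    _ ≤ |c| * (b + |μm|) := by
        refine mul_le_mul_of_nonneg_left h1 (abs_nonneg _)
  -- pointwise chord bound for the centered variable
  have step1 : ∫ s, Real.exp (c * s) ∂ν ≤
      Real.exp (c * μm) * Real.cosh (c * b) := by
    have hle : ∀ᵐ s ∂ν, Real.exp (c * s) ≤
        Real.exp (c * μm) * (Real.cosh (c * b) + ((s - μm) / b) * Real.sinh (c * b)) := by
      filter_upwards [hbd] with s hs
      have := aux_chord (c := c) hb hs
      calc Real.exp (c * s) = Real.exp (c * μm) * Real.exp (c * (s - μm)) := by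
            rw [← Real.exp_add]; ring_nf
      _ ≤ _ := by
            refine mul_le_mul_of_nonneg_left this (Real.exp_nonneg _)
    have hRHSint : Integrable (fun s : ℝ =>
        Real.exp (c * μm) * (Real.cosh (c * b) + ((s - μm) / b) * Real.sinh (c * b))) ν := by
      apply Integrable.const_mul
      apply Integrable.add (integrable_const _)
      have : Integrable (fun s : ℝ => s - μm) ν := hid.sub (integrable_const _)
      simpa [div_mul_eq_mul_div, mul_comm, mul_div_assoc] using
        ((this.div_const b).mul_const (Real.sinh (c * b)))
    calc ∫ s, Real.exp (c * s) ∂ν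
        ≤ ∫ s, Real.exp (c * μm) * (Real.cosh (c * b) + ((s - μm) / b) * Real.sinh (c * b)) ∂ν :=
          integral_mono_ae hexp hRHSint hle
    _ = Real.exp (c * μm) * Real.cosh (c * b) := by
          have hc : ∫ s, (s - μm) ∂ν = 0 := by
            rw [integral_sub hid (integrable_const _)]
            simp [hmean]
          have h2 : ∫ s, (s - μm) / b * Real.sinh (c * b) ∂ν = 0 := by
            rw [integral_mul_const, integral_div, hc]
            simp
          have hsub : Integrable (fun s : ℝ => (s - μm) / b * Real.sinh (c * b)) ν := by
            exact (((hid.sub (integrable_const _)).div_const b).mul_const _)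
          rw [integral_const_mul, integral_add (integrable_const _) hsub, h2]
          simp
  calc ∫ s, Real.exp (c * s) ∂ν ≤ Real.exp (c * μm) * Real.cosh (c * b) := step1
  _ ≤ Real.exp (c * μm) * Real.exp ((c * b) ^ 2 / 2) := by
      refine mul_le_mul_of_nonneg_left ?_ (Real.exp_nonneg _)
      exact Real.cosh_le_exp_half_sq _
  _ = Real.exp (c * μm + c ^ 2 * b ^ 2 / 2) := by
      rw [← Real.exp_add]; ring_nf

set_option maxHeartbeats 1000000

lemma aux_fubini (ν : Measure ℝ) [IsProbabilityMeasure ν] (m : ℕ) (f : Fin m → ℝ → ℝ) :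
    ∫ x : Fin m → ℝ, ∏ j, f j (x j) ∂(Measure.pi fun _ : Fin m => ν)
      = ∏ j, ∫ s, f j s ∂ν := by
  letI : MeasureSpace ℝ := ⟨ν⟩
  exact MeasureTheory.integral_fintype_prod_eq_prod f

lemma aux_chernoff (m : ℕ) (ν : Measure ℝ) [IsProbabilityMeasure ν] (w : Fin m → ℝ)
    {b μm : ℝ} (hb : 0 < b) (hbd : ∀ᵐ s ∂ν, |s - μm| ≤ b) (hmean : ∫ s, s ∂ν = μm)
    {L t : ℝ} (ht : 0 ≤ t) :
    (Measure.pi fun _ : Fin m => ν) {x : Fin m → ℝ | L ≤ ∑ j, w j * x j}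
      ≤ ENNReal.ofReal (Real.exp (-t * L + t * μm * (∑ j, w j)
          + t ^ 2 * (∑ j, (w j) ^ 2) * b ^ 2 / 2)) := by
  set P : Measure (Fin m → ℝ) := Measure.pi fun _ : Fin m => ν with hP
  have hPprob : IsProbabilityMeasure P := by rw [hP]; infer_instance
  set X : (Fin m → ℝ) → ℝ := fun x => ∑ j, w j * x j with hX
  show P {x : Fin m → ℝ | L ≤ X x} ≤ _
  -- a.e. bound on coordinates
  have haeP : ∀ᵐ x ∂P, ∀ j, |x j - μm| ≤ b := by
    rw [MeasureTheory.ae_all_iff]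
    intro j
    exact (MeasureTheory.Measure.tendsto_eval_ae_ae (μ := fun _ : Fin m => ν) (i := j)).eventually hbd
  have hXmeas : Measurable X := by
    rw [hX]
    exact Finset.measurable_sum Finset.univ
      (fun j _ => ((measurable_pi_apply j : Measurable fun x : Fin m → ℝ => x j).const_mul (w j)))
  have hint : Integrable (fun x => Real.exp (t * X x)) P := by
    refine Integrable.mono' (integrable_const (Real.exp (|t| * (∑ j, |w j| * (b + |μm|)))))
      ((Real.measurable_exp.comp (hXmeas.const_mul t)).aestronglyMeasurable) ?_
    filter_upwards [haeP] with x hx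
    rw [Real.norm_eq_abs, abs_of_nonneg (Real.exp_nonneg _)]
    refine Real.exp_le_exp.mpr ?_
    calc t * X x ≤ |t * X x| := le_abs_self _
    _ = |t| * |X x| := abs_mul _ _
    _ ≤ |t| * (∑ j, |w j| * (b + |μm|)) := by
        refine mul_le_mul_of_nonneg_left ?_ (abs_nonneg _)
        calc |X x| ≤ ∑ j, |w j * x j| := Finset.abs_sum_le_sum_abs _ _
        _ ≤ ∑ j, |w j| * (b + |μm|) := by
            refine Finset.sum_le_sum fun j _ => ?_
            rw [abs_mul]
            refine mul_le_mul_of_nonneg_left ?_ (abs_nonneg _)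
            calc |x j| = |(x j - μm) + μm| := by ring_nf
            _ ≤ |x j - μm| + |μm| := abs_add_le _ _
            _ ≤ b + |μm| := by linarith [hx j]
  -- Chernoff + product structure
  have hmgf : mgf X P t ≤ Real.exp (t * μm * (∑ j, w j) + t ^ 2 * (∑ j, (w j) ^ 2) * b ^ 2 / 2) := by
    have h1 : ∀ x : Fin m → ℝ, Real.exp (t * X x)
        = ∏ j, Real.exp ((t * w j) * x j) := by
      intro x
      rw [← Real.exp_sum]
      congr 1
      rw [hX, Finset.mul_sum]
      exact Finset.sum_congr rfl fun j _ => by ring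
    have hprod : mgf X P t = ∏ j, ∫ s, Real.exp ((t * w j) * s) ∂ν := by
      calc mgf X P t
          = ∫ x : Fin m → ℝ, ∏ j, Real.exp ((t * w j) * (x j)) ∂P :=
            integral_congr_ae (Filter.Eventually.of_forall fun x => h1 x)
      _ = ∏ j, ∫ s, Real.exp ((t * w j) * s) ∂ν := by
            rw [hP]
            exact aux_fubini ν m (fun j s => Real.exp ((t * w j) * s))
    rw [hprod]
    calc ∏ j, ∫ s, Real.exp ((t * w j) * s) ∂ν
        ≤ ∏ j, Real.exp ((t * w j) * μm + (t * w j) ^ 2 * b ^ 2 / 2) := by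
          refine Finset.prod_le_prod (fun j _ => integral_nonneg fun s => Real.exp_nonneg _)
            (fun j _ => aux_mgf ν hb hbd hmean (t * w j))
    _ = Real.exp (∑ j, ((t * w j) * μm + (t * w j) ^ 2 * b ^ 2 / 2)) := (Real.exp_sum _ _).symm
    _ = Real.exp (t * μm * (∑ j, w j) + t ^ 2 * (∑ j, (w j) ^ 2) * b ^ 2 / 2) := by
        congr 1
        rw [Finset.sum_add_distrib, Finset.mul_sum, Finset.mul_sum]
        congr 1
        · exact Finset.sum_congr rfl fun j _ => by ring
        · rw [Finset.sum_mul, Finset.sum_div]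
          exact Finset.sum_congr rfl fun j _ => by ring
  have hchern := measure_ge_le_exp_mul_mgf (μ := P) (X := X) L ht hint
  have hne : P {x | L ≤ X x} ≠ ⊤ := measure_ne_top _ _
  calc P {x | L ≤ X x} = ENNReal.ofReal ((P {x | L ≤ X x}).toReal) :=
        (ENNReal.ofReal_toReal hne).symm
  _ ≤ ENNReal.ofReal (Real.exp (-t * L) * mgf X P t) := ENNReal.ofReal_le_ofReal hchern
  _ ≤ _ := by
      refine ENNReal.ofReal_le_ofReal ?_
      calc Real.exp (-t * L) * mgf X P t
          ≤ Real.exp (-t * L) * Real.exp (t * μm * (∑ j, w j)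
              + t ^ 2 * (∑ j, (w j) ^ 2) * b ^ 2 / 2) :=
            mul_le_mul_of_nonneg_left hmgf (Real.exp_nonneg _)
      _ = _ := by rw [← Real.exp_add]; ring_nf

set_option maxHeartbeats 1000000
open scoped RealInnerProductSpace

noncomputable def Ev {m : ℕ} (v : Fin m → ℝ) : EuclideanSpace ℝ (Fin m) :=
  (WithLp.linearEquiv 2 ℝ (Fin m → ℝ)).symm v

lemma Ev_inner {m : ℕ} (v w : Fin m → ℝ) : ⟪Ev v, Ev w⟫ = ∑ i, v i * w i := by
  simp [Ev, PiLp.inner_apply, RCLike.inner_apply]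
  exact Finset.sum_congr rfl fun i _ => mul_comm _ _

lemma Ev_norm_sq {m : ℕ} (v : Fin m → ℝ) : ‖Ev v‖ ^ 2 = ∑ i, v i ^ 2 := by
  rw [← real_inner_self_eq_norm_sq, Ev_inner]
  exact Finset.sum_congr rfl fun i _ => (sq (v i)).symm

lemma Ev_coord_le {m : ℕ} (v : Fin m → ℝ) (i : Fin m) : |v i| ≤ ‖Ev v‖ := by
  have h1 : (v i) ^ 2 ≤ ‖Ev v‖ ^ 2 := by
    rw [Ev_norm_sq]
    exact Finset.single_le_sum (f := fun j => v j ^ 2) (fun j _ => sq_nonneg _)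
      (Finset.mem_univ i)
  calc |v i| = Real.sqrt ((v i) ^ 2) := (Real.sqrt_sq_eq_abs _).symm
  _ ≤ Real.sqrt (‖Ev v‖ ^ 2) := Real.sqrt_le_sqrt h1
  _ = ‖Ev v‖ := Real.sqrt_sq (norm_nonneg _)

lemma Ev_mulVec_le {m : ℕ} {B : Matrix (Fin m) (Fin m) ℝ} {c : ℝ} (hB : opNorm B ≤ c)
    (v : Fin m → ℝ) : ‖Ev (B.mulVec v)‖ ≤ c * ‖Ev v‖ := by
  have h0 : Ev (B.mulVec v) = LinearMap.toContinuousLinearMap (Matrix.toEuclideanLin B) (Ev v) :=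
    rfl
  rw [h0]
  calc ‖LinearMap.toContinuousLinearMap (Matrix.toEuclideanLin B) (Ev v)‖
      ≤ opNorm B * ‖Ev v‖ := ContinuousLinearMap.le_opNorm _ _
  _ ≤ c * ‖Ev v‖ := mul_le_mul_of_nonneg_right hB (norm_nonneg _)

lemma matrix_facts (d m : ℕ) (hdm : d ≤ m) (hmd : m ≤ d ^ 2)
    (hd : (1001 : ℝ) ≤ (d : ℝ))
    (A : Matrix (Fin m) (Fin m) ℝ) (hAsym : A.IsSymm) (hopA : opNorm A ≤ 1 / 2)
    (M : Matrix (Fin m) (Fin m) ℝ)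
    (hM : M = (1 / (d : ℝ)) • Matrix.of (fun _ _ : Fin m => (1 : ℝ))
          + (1 - 1 / (d : ℝ)) • (1 : Matrix (Fin m) (Fin m) ℝ) + A) :
    (∀ i, ∑ j, (M⁻¹ i j) ^ 2 ≤ 9) ∧ (∀ i, |∑ j, M⁻¹ i j| ≤ 2 * Real.sqrt (d : ℝ)) := by
  have hd1 : 1 ≤ d := by exact_mod_cast le_trans (by norm_num : (1:ℝ) ≤ 1001) hd
  set r : ℝ := (d : ℝ) with hrdef
  have hr0 : (0:ℝ) < r := by simp only [hrdef]; linarith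
  have hmr : r ≤ (m : ℝ) := by simp only [hrdef]; exact_mod_cast hdm
  -- formula for M *ᵥ x
  have hMx : ∀ x : Fin m → ℝ, ∀ i, M.mulVec x i
      = (1/r) * (∑ j, x j) + (1 - 1/r) * x i + A.mulVec x i := by
    intro x i
    rw [hM, Matrix.add_mulVec, Matrix.add_mulVec, Matrix.smul_mulVec,
      Matrix.smul_mulVec, Matrix.one_mulVec]
    have hJ : (Matrix.of (fun _ _ : Fin m => (1:ℝ))).mulVec x i = ∑ j, x j := by
      simp [Matrix.mulVec, dotProduct]
    simp only [Pi.add_apply, Pi.smul_apply, smul_eq_mul, hJ]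
  -- coercivity
  have hcoer : ∀ x : Fin m → ℝ, ‖Ev x‖ ^ 2 / 3 ≤ ⟪Ev (M.mulVec x), Ev x⟫ := by
    intro x
    have hiA : |⟪Ev (A.mulVec x), Ev x⟫| ≤ (1/2) * (‖Ev x‖ * ‖Ev x‖) := by
      calc |⟪Ev (A.mulVec x), Ev x⟫| ≤ ‖Ev (A.mulVec x)‖ * ‖Ev x‖ := abs_real_inner_le_norm _ _
      _ ≤ (1/2 * ‖Ev x‖) * ‖Ev x‖ :=
          mul_le_mul_of_nonneg_right (Ev_mulVec_le hopA x) (norm_nonneg _)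
      _ = (1/2) * (‖Ev x‖ * ‖Ev x‖) := by ring
    have hsum : ⟪Ev (M.mulVec x), Ev x⟫ = (1/r) * (∑ j, x j) ^ 2
        + (1 - 1/r) * (∑ i, x i ^ 2) + ⟪Ev (A.mulVec x), Ev x⟫ := by
      rw [Ev_inner, Ev_inner]
      calc ∑ i, M.mulVec x i * x i
          = ∑ i, ((1/r) * ((∑ j, x j) * x i) + (1 - 1/r) * x i ^ 2 + A.mulVec x i * x i) :=
            Finset.sum_congr rfl fun i _ => by rw [hMx]; ring
      _ = (1/r) * (∑ j, x j) ^ 2 + (1 - 1/r) * (∑ i, x i ^ 2)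
            + ∑ i, A.mulVec x i * x i := by
          rw [Finset.sum_add_distrib, Finset.sum_add_distrib, ← Finset.mul_sum, ← Finset.mul_sum,
            ← Finset.mul_sum]
          rw [← sq]
    rw [hsum]
    have h2 : ∑ i, x i ^ 2 = ‖Ev x‖ ^ 2 := (Ev_norm_sq x).symm
    rw [h2]
    have hrr : 1/r * ‖Ev x‖ ^ 2 ≤ (1/1001) * ‖Ev x‖ ^ 2 := by
      refine mul_le_mul_of_nonneg_right ?_ (sq_nonneg _)
      rw [div_le_div_iff₀ hr0 (by norm_num)]
      linarith
    have hS2 : 0 ≤ (1/r) * (∑ j, x j) ^ 2 := by positivity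
    have hiA' := (abs_le.mp hiA).1
    nlinarith [sq_nonneg ‖Ev x‖]
  -- lower bound for M
  have hMlow : ∀ x : Fin m → ℝ, ‖Ev x‖ ≤ 3 * ‖Ev (M.mulVec x)‖ := by
    intro x
    have h := hcoer x
    have hCS := real_inner_le_norm (Ev (M.mulVec x)) (Ev x)
    have hsymm : ⟪Ev (M.mulVec x), Ev x⟫ ≤ ‖Ev (M.mulVec x)‖ * ‖Ev x‖ := hCS
    nlinarith [norm_nonneg (Ev x), norm_nonneg (Ev (M.mulVec x)),
      sq_nonneg (‖Ev x‖ - 3 * ‖Ev (M.mulVec x)‖)]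
  -- invertibility
  have hdet : IsUnit M.det := by
    rw [← Matrix.isUnit_iff_isUnit_det, ← Matrix.mulVec_injective_iff_isUnit]
    intro x y hxy
    have h0 : M.mulVec (x - y) = 0 := by rw [Matrix.mulVec_sub, hxy, sub_self]
    have h1 := hMlow (x - y)
    rw [h0] at h1
    have hEv0 : Ev (0 : Fin m → ℝ) = 0 := by simp [Ev]
    rw [hEv0, norm_zero, mul_zero] at h1
    have h2 : Ev (x - y) = 0 := norm_le_zero_iff.mp h1
    have h3 : x - y = 0 := by
      have := (WithLp.linearEquiv 2 ℝ (Fin m → ℝ)).symm.injective (a₁ := x - y) (a₂ := 0)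
      exact this (h2.trans hEv0.symm)
    exact sub_eq_zero.mp h3
  have hMM : M * M⁻¹ = 1 := Matrix.mul_nonsing_inv M hdet
  have hMM' : M⁻¹ * M = 1 := Matrix.nonsing_inv_mul M hdet
  have hMinvle : ∀ y : Fin m → ℝ, ‖Ev (M⁻¹.mulVec y)‖ ≤ 3 * ‖Ev y‖ := by
    intro y
    have h := hMlow (M⁻¹.mulVec y)
    rwa [Matrix.mulVec_mulVec, hMM, Matrix.one_mulVec] at h
  -- symmetry
  have hMsym : Mᵀ = M := by
    rw [hM, Matrix.transpose_add, Matrix.transpose_add, Matrix.transpose_smul,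
      Matrix.transpose_smul, Matrix.transpose_one, hAsym]
    rfl
  have hMisym : (M⁻¹)ᵀ = M⁻¹ := by rw [Matrix.transpose_nonsing_inv, hMsym]
  constructor
  · -- row square sums
    intro i
    have hrow : (fun j => M⁻¹ i j) = M⁻¹.mulVec (Pi.single i 1) := by
      funext k
      have h1 : M⁻¹.mulVec (Pi.single i 1) k = M⁻¹ k i := by
        simp [Matrix.mulVec, dotProduct, Pi.single_apply]
      rw [h1]
      conv_lhs => rw [← hMisym]
      rfl
    have hnorm := hMinvle (Pi.single i 1)
    have hsingle : ‖Ev (Pi.single i 1 : Fin m → ℝ)‖ ^ 2 = 1 := by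
      rw [Ev_norm_sq]
      simp [Pi.single_apply]
    have hsingle' : ‖Ev (Pi.single i 1 : Fin m → ℝ)‖ = 1 := by
      rw [← Real.sqrt_sq (norm_nonneg _), hsingle, Real.sqrt_one]
    rw [hsingle'] at hnorm
    have h1 : ∑ j, (M⁻¹ i j) ^ 2 = ‖Ev (M⁻¹.mulVec (Pi.single i 1))‖ ^ 2 := by
      rw [Ev_norm_sq]
      exact Finset.sum_congr rfl fun j _ => by rw [congrFun hrow j]
    rw [h1]
    nlinarith [norm_nonneg (Ev (M⁻¹.mulVec (Pi.single i 1)))]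
  · -- row sums
    intro i
    set one : Fin m → ℝ := fun _ => 1 with hone
    have hsum1 : (∑ j : Fin m, one j) = (m : ℝ) := by simp [hone]
    set lam : ℝ := (m : ℝ)/r + 1 - 1/r with hlam
    have h1r : 1/r ≤ 1 := by rw [div_le_one hr0]; linarith
    have hlam_ge : (m : ℝ)/r ≤ lam := by rw [hlam]; linarith
    have hm0' : (0:ℝ) < (m:ℝ) := lt_of_lt_of_le hr0 hmr
    have hmr_pos : (0:ℝ) < (m:ℝ)/r := div_pos hm0' hr0
    have hlam_pos : 0 < lam := lt_of_lt_of_le hmr_pos hlam_ge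
    have hMone : M.mulVec one = lam • one + A.mulVec one := by
      funext k
      rw [Pi.add_apply, Pi.smul_apply, hMx one k, hsum1]
      simp only [hone, smul_eq_mul, mul_one]
      rw [hlam]
      ring
    have hinv_one : M⁻¹.mulVec (M.mulVec one) = one := by
      rw [Matrix.mulVec_mulVec, hMM', Matrix.one_mulVec]
    set z : Fin m → ℝ := M⁻¹.mulVec (A.mulVec one) with hz
    have hkey : 1 = lam * (M⁻¹.mulVec one i) + z i := by
      have h2 := congrFun hinv_one i
      rw [hMone, Matrix.mulVec_add, Matrix.mulVec_smul] at h2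
      rw [Pi.add_apply, Pi.smul_apply, smul_eq_mul] at h2
      rw [← hz] at h2
      simpa [hone] using h2.symm
    have hEvone : ‖Ev one‖ = Real.sqrt (m : ℝ) := by
      rw [← Real.sqrt_sq (norm_nonneg _), Ev_norm_sq]
      simp [hone]
    have hzb : |z i| ≤ (3/2) * Real.sqrt (m : ℝ) := by
      calc |z i| ≤ ‖Ev z‖ := Ev_coord_le z i
      _ ≤ 3 * ‖Ev (A.mulVec one)‖ := hMinvle _
      _ ≤ 3 * (1/2 * ‖Ev one‖) :=
          mul_le_mul_of_nonneg_left (Ev_mulVec_le hopA one) (by norm_num)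
      _ = (3/2) * Real.sqrt (m : ℝ) := by rw [hEvone]; ring
    have hrow_eq : ∑ j, M⁻¹ i j = M⁻¹.mulVec one i := by
      simp [Matrix.mulVec, dotProduct, hone]
    have hui : M⁻¹.mulVec one i = (1 - z i)/lam := by
      rw [eq_div_iff (ne_of_gt hlam_pos)]
      linarith [hkey]
    rw [hrow_eq, hui]
    -- final arithmetic
    set sm := Real.sqrt (m : ℝ) with hsm
    set sr := Real.sqrt r with hsr
    have hsm2 : sm ^ 2 = (m : ℝ) := Real.sq_sqrt (by positivity)
    have hsr2 : sr ^ 2 = r := Real.sq_sqrt (le_of_lt hr0)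
    have hsr_pos : 0 < sr := Real.sqrt_pos.mpr hr0
    have hsm_ge : sr ≤ sm := Real.sqrt_le_sqrt hmr
    have hsm_pos : 0 < sm := lt_of_lt_of_le hsr_pos hsm_ge
    have hsr2' : 2 ≤ sr := by nlinarith
    have hnum : |1 - z i| ≤ 1 + (3/2) * sm := by
      calc |1 - z i| ≤ |(1:ℝ)| + |z i| := abs_sub _ _
      _ ≤ 1 + (3/2) * sm := by rw [abs_one]; linarith [hzb]
    have hlamr : 1/lam ≤ r/(m:ℝ) := by
      rw [div_le_div_iff₀ hlam_pos (by positivity)]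
      calc 1 * (m:ℝ) = ((m:ℝ)/r) * r := by field_simp
      _ ≤ lam * r := mul_le_mul_of_nonneg_right hlam_ge (le_of_lt hr0)
      _ = r * lam := by ring
    have hfin1 : (1 + (3/2) * sm) / lam ≤ (1 + (3/2) * sm) * (r/(m:ℝ)) := by
      rw [div_eq_mul_inv, ← one_div]
      exact mul_le_mul_of_nonneg_left hlamr (by positivity)
    have hfin2 : (1 + (3/2) * sm) * (r/(m:ℝ)) ≤ 2 * sr := by
      have hrm : r/(m:ℝ) ≤ 1 := by
        rw [div_le_one (by positivity)]
        exact hmr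
      have e1 : sm * (r / (m:ℝ)) = r / sm := by
        rw [← hsm2, sq]
        rw [div_mul_eq_div_div, eq_div_iff (ne_of_gt hsm_pos)]
        field_simp
      have e2 : r / sm ≤ sr := by
        rw [div_le_iff₀ hsm_pos]
        nlinarith [hsr2, hsm_ge, hsr_pos]
      calc (1 + (3/2) * sm) * (r/(m:ℝ)) = r/(m:ℝ) + (3/2) * (sm * (r/(m:ℝ))) := by ring
      _ = r/(m:ℝ) + (3/2) * (r/sm) := by rw [e1]
      _ ≤ 1 + (3/2) * sr := by
          have h32 : (3/2 : ℝ) * (r/sm) ≤ (3/2) * sr := by linarith [e2]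
          linarith
      _ ≤ 2 * sr := by linarith [hsr2']
    calc |(1 - z i)/lam| = |1 - z i| / lam := by rw [abs_div, abs_of_pos hlam_pos]
    _ ≤ (1 + (3/2) * sm) / lam := by
        gcongr
    _ ≤ (1 + (3/2) * sm) * (r/(m:ℝ)) := hfin1
    _ ≤ 2 * sr := hfin2

/-- For every `C₀ > 0` there is `d₀` such that for all `d ≥ d₀` and `d ≤ m ≤ d²`:
if `M = (1/d)·𝟙𝟙ᵀ + (1 − 1/d)·I + A` with `A` symmetric and `‖A‖₂ ≤ 1/2`, and
`ε₁,…,ε_m` are i.i.d. with `|ε₁| ≤ log(d)/√d` a.s. and `|E[ε₁]| ≤ C₀/d`, then with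
probability at least `1 − 1/d` all coordinates of `δ = M⁻¹ε` satisfy `|δ_i| ≤ log²(d)/√d`. -/
theorem delta_coordinates_small (C₀ : ℝ) (hC₀ : 0 < C₀) :
    ∃ d₀ : ℕ, ∀ d : ℕ, d₀ ≤ d → ∀ m : ℕ, d ≤ m → m ≤ d ^ 2 →
      ∀ A : Matrix (Fin m) (Fin m) ℝ, A.IsSymm → opNorm A ≤ 1 / 2 →
      ∀ M : Matrix (Fin m) (Fin m) ℝ,
        M = (1 / (d : ℝ)) • Matrix.of (fun _ _ : Fin m => (1 : ℝ))
          + (1 - 1 / (d : ℝ)) • (1 : Matrix (Fin m) (Fin m) ℝ) + A →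
      ∀ ν : Measure ℝ, IsProbabilityMeasure ν →
        (∀ᵐ s ∂ν, |s| ≤ Real.log d / Real.sqrt d) →
        |∫ s, s ∂ν| ≤ C₀ / d →
        ENNReal.ofReal (1 - 1 / (d : ℝ)) ≤
          (Measure.pi fun _ : Fin m => ν)
            {ε : Fin m → ℝ | ∀ i, |M⁻¹.mulVec ε i| ≤ (Real.log d) ^ 2 / Real.sqrt d} := by
  refine ⟨⌈Real.exp (1000 + C₀)⌉₊, ?_⟩
  intro d hd m hdm hmd A hAsym hopA M hM ν hν hae hmean
  haveI := hν
  have hr : Real.exp (1000 + C₀) ≤ (d : ℝ) := by exact_mod_cast Nat.ceil_le.mp hd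
  set r : ℝ := (d : ℝ) with hrdef
  have hr0 : 0 < r := lt_of_lt_of_le (Real.exp_pos _) hr
  have hlog : 1000 + C₀ ≤ Real.log r := (Real.le_log_iff_exp_le hr0).mpr hr
  have hr1001 : 1001 ≤ r := by
    have h := Real.add_one_le_exp (1000 + C₀)
    linarith
  set l : ℝ := Real.log r with hldef
  set s : ℝ := Real.sqrt r with hsdef
  have hl1000 : 1000 ≤ l := by linarith
  have hlC : C₀ ≤ l := by linarith
  have hs0 : 0 < s := Real.sqrt_pos.mpr hr0
  have hs2 : s ^ 2 = r := Real.sq_sqrt (le_of_lt hr0)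
  have hs1 : 1 ≤ s := by nlinarith
  obtain ⟨hrow2, hrow1⟩ :=
    matrix_facts d m hdm hmd hr1001 A hAsym hopA M hM
  set μm : ℝ := ∫ x, x ∂ν with hμdef
  have hb' : 0 < 2 * l / s := by positivity
  have hμl : |μm| ≤ l / s := by
    refine le_trans hmean ?_
    rw [div_le_div_iff₀ hr0 hs0]
    have h1 : C₀ * s ≤ l * s := mul_le_mul_of_nonneg_right hlC (le_of_lt hs0)
    have h2 : l * s ≤ l * (s * s) := by
      refine mul_le_mul_of_nonneg_left ?_ (by linarith)
      nlinarith
    have h3 : s * s = r := by nlinarith [hs2]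
    nlinarith
  have hcent : ∀ᵐ x ∂ν, |x - μm| ≤ 2 * l / s := by
    filter_upwards [hae] with x hx
    calc |x - μm| ≤ |x| + |μm| := abs_sub _ _
    _ ≤ l / s + l / s := add_le_add hx hμl
    _ = 2 * l / s := by ring
  set L : ℝ := l ^ 2 / s with hLdef
  set t : ℝ := s / 48 with htdef
  have ht : 0 ≤ t := by positivity
  have key : ∀ w : Fin m → ℝ, (∑ j, (w j) ^ 2) ≤ 9 → |∑ j, w j| ≤ 2 * s →
      (Measure.pi fun _ : Fin m => ν) {x : Fin m → ℝ | L ≤ ∑ j, w j * x j}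
        ≤ ENNReal.ofReal (Real.exp (-(l ^ 2 / 192))) := by
    intro w hW hS
    refine (aux_chernoff m ν w hb' hcent rfl ht).trans
      (ENNReal.ofReal_le_ofReal (Real.exp_le_exp.mpr ?_))
    have e1 : t * L = l ^ 2 / 48 := by
      rw [htdef, hLdef]
      field_simp
    have e2 : t * μm * (∑ j, w j) ≤ l ^ 2 / 192 := by
      have hC24 : t * (C₀ / r) * (2 * s) = C₀ / 24 := by
        rw [htdef, ← hs2]
        field_simp
        ring
      calc t * μm * (∑ j, w j) ≤ |t * μm * (∑ j, w j)| := le_abs_self _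
      _ = t * |μm| * |∑ j, w j| := by
          rw [abs_mul, abs_mul, abs_of_nonneg ht]
      _ ≤ t * (C₀ / r) * (2 * s) := by
          have h1 : t * |μm| ≤ t * (C₀ / r) := mul_le_mul_of_nonneg_left hmean ht
          have h2 : 0 ≤ t * (C₀ / r) := by positivity
          calc t * |μm| * |∑ j, w j| ≤ t * (C₀ / r) * |∑ j, w j| :=
                mul_le_mul_of_nonneg_right h1 (abs_nonneg _)
          _ ≤ t * (C₀ / r) * (2 * s) := mul_le_mul_of_nonneg_left hS h2
      _ = C₀ / 24 := hC24
      _ ≤ l ^ 2 / 192 := by nlinarith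
    have e30 : t * (2 * l / s) = l / 24 := by
      rw [htdef]
      field_simp
      ring
    have e3 : t ^ 2 * (∑ j, (w j) ^ 2) * (2 * l / s) ^ 2 / 2 ≤ l ^ 2 / 128 := by
      calc t ^ 2 * (∑ j, (w j) ^ 2) * (2 * l / s) ^ 2 / 2
          = (∑ j, (w j) ^ 2) * (t * (2 * l / s)) ^ 2 / 2 := by ring
      _ ≤ 9 * (t * (2 * l / s)) ^ 2 / 2 := by
          have := sq_nonneg (t * (2 * l / s))
          nlinarith
      _ = 9 * (l / 24) ^ 2 / 2 := by rw [e30]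
      _ ≤ l ^ 2 / 128 := by nlinarith [sq_nonneg l]
    have := e1
    nlinarith [sq_nonneg l]
  have hbad : ∀ i : Fin m, {x : Fin m → ℝ | L < |M⁻¹.mulVec x i|} ⊆
      {x : Fin m → ℝ | L ≤ ∑ j, M⁻¹ i j * x j}
        ∪ {x : Fin m → ℝ | L ≤ ∑ j, (-(M⁻¹ i j)) * x j} := by
    intro i x hx
    simp only [Set.mem_setOf_eq] at hx
    have hmv : M⁻¹.mulVec x i = ∑ j, M⁻¹ i j * x j := by
      simp [Matrix.mulVec, dotProduct]
    rw [hmv] at hx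
    rcases le_or_gt 0 (∑ j, M⁻¹ i j * x j) with h | h
    · left
      simp only [Set.mem_setOf_eq]
      rw [abs_of_nonneg h] at hx
      linarith
    · right
      simp only [Set.mem_setOf_eq]
      rw [abs_of_neg h] at hx
      have hneg : ∑ j, (-(M⁻¹ i j)) * x j = -(∑ j, M⁻¹ i j * x j) := by
        rw [← Finset.sum_neg_distrib]
        exact Finset.sum_congr rfl fun j _ => by ring
      rw [hneg]
      linarith
  set P : Measure (Fin m → ℝ) := Measure.pi fun _ : Fin m => ν with hP
  haveI hPp : IsProbabilityMeasure P := by rw [hP]; infer_instance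
  set q : ENNReal := ENNReal.ofReal (Real.exp (-(l ^ 2 / 192))) with hq
  set G : Set (Fin m → ℝ) := {ε : Fin m → ℝ | ∀ i, |M⁻¹.mulVec ε i| ≤ L} with hG
  have hGc : Gᶜ ⊆ ⋃ i, ({x : Fin m → ℝ | L ≤ ∑ j, M⁻¹ i j * x j}
      ∪ {x : Fin m → ℝ | L ≤ ∑ j, (-(M⁻¹ i j)) * x j}) := by
    intro x hx
    simp only [hG, Set.mem_compl_iff, Set.mem_setOf_eq, not_forall, not_le] at hx
    obtain ⟨i, hi⟩ := hx
    exact Set.mem_iUnion.mpr ⟨i, hbad i hi⟩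
  have hqi : ∀ i : Fin m, P ({x : Fin m → ℝ | L ≤ ∑ j, M⁻¹ i j * x j}
      ∪ {x : Fin m → ℝ | L ≤ ∑ j, (-(M⁻¹ i j)) * x j}) ≤ q + q := by
    intro i
    refine (measure_union_le _ _).trans (add_le_add ?_ ?_)
    · exact key _ (hrow2 i) (hrow1 i)
    · refine key _ ?_ ?_
      · have : ∀ j, (-(M⁻¹ i j)) ^ 2 = (M⁻¹ i j) ^ 2 := fun j => neg_sq _
        rw [Finset.sum_congr rfl fun j _ => this j]
        exact hrow2 i
      · have : (∑ j, -(M⁻¹ i j)) = -(∑ j, M⁻¹ i j) := by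
          rw [← Finset.sum_neg_distrib]
        rw [this, abs_neg]
        exact hrow1 i
  have hreal : (m : ℝ) * (2 * Real.exp (-(l ^ 2 / 192))) ≤ 1 / r := by
    have hm2 : (m : ℝ) ≤ r ^ 2 := by
      rw [hrdef]
      exact_mod_cast hmd
    have hX : 2 * r ^ 3 ≤ Real.exp (l ^ 2 / 192) := by
      have hlog2 : Real.log 2 ≤ 1 := by
        calc Real.log 2 ≤ 2 - 1 := Real.log_le_sub_one_of_pos (by norm_num)
        _ = 1 := by norm_num
      have h1 : Real.log 2 + 3 * l ≤ l ^ 2 / 192 := by nlinarith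
      calc 2 * r ^ 3 = Real.exp (Real.log 2 + 3 * l) := by
            rw [Real.exp_add, Real.exp_log (by norm_num : (0:ℝ) < 2)]
            congr 1
            rw [show (3 : ℝ) * l = ((3 : ℕ) : ℝ) * l by norm_num, Real.exp_nat_mul,
              hldef, Real.exp_log hr0]
      _ ≤ Real.exp (l ^ 2 / 192) := Real.exp_le_exp.mpr h1
    have hE : 0 < Real.exp (l ^ 2 / 192) := Real.exp_pos _
    rw [Real.exp_neg]
    calc (m : ℝ) * (2 * (Real.exp (l ^ 2 / 192))⁻¹)
        = 2 * (m : ℝ) * (Real.exp (l ^ 2 / 192))⁻¹ := by ring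
    _ ≤ 2 * r ^ 2 * (Real.exp (l ^ 2 / 192))⁻¹ := by
        refine mul_le_mul_of_nonneg_right (by linarith) (by positivity)
    _ ≤ 2 * r ^ 2 * (2 * r ^ 3)⁻¹ := by
        refine mul_le_mul_of_nonneg_left ?_ (by positivity)
        exact inv_anti₀ (by positivity) hX
    _ = 1 / r := by
        field_simp
  have hcompl : P Gᶜ ≤ ENNReal.ofReal (1 / r) := by
    calc P Gᶜ ≤ P (⋃ i, ({x : Fin m → ℝ | L ≤ ∑ j, M⁻¹ i j * x j}
          ∪ {x : Fin m → ℝ | L ≤ ∑ j, (-(M⁻¹ i j)) * x j})) := measure_mono hGc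
    _ ≤ ∑ i : Fin m, P ({x : Fin m → ℝ | L ≤ ∑ j, M⁻¹ i j * x j}
          ∪ {x : Fin m → ℝ | L ≤ ∑ j, (-(M⁻¹ i j)) * x j}) := measure_iUnion_fintype_le _ _
    _ ≤ ∑ _i : Fin m, (q + q) := Finset.sum_le_sum fun i _ => hqi i
    _ = (m : ENNReal) * (q + q) := by
        rw [Finset.sum_const, Finset.card_univ, Fintype.card_fin, nsmul_eq_mul]
    _ ≤ ENNReal.ofReal (1 / r) := by
        rw [hq, ← ENNReal.ofReal_add (Real.exp_nonneg _) (Real.exp_nonneg _),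
          ← ENNReal.ofReal_natCast m, ← ENNReal.ofReal_mul (by positivity)]
        refine ENNReal.ofReal_le_ofReal ?_
        calc (m : ℝ) * (Real.exp (-(l ^ 2 / 192)) + Real.exp (-(l ^ 2 / 192)))
            = (m : ℝ) * (2 * Real.exp (-(l ^ 2 / 192))) := by ring
        _ ≤ 1 / r := hreal
  have huniv : (1 : ENNReal) ≤ P G + P Gᶜ := by
    rw [← measure_univ (μ := P), ← Set.union_compl_self G]
    exact measure_union_le _ _
  have h1r : ENNReal.ofReal (1 - 1 / r) + ENNReal.ofReal (1 / r) = 1 := by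
    rw [← ENNReal.ofReal_add (by have := (div_le_one hr0).mpr (by linarith : (1:ℝ) ≤ r); linarith : (0:ℝ) ≤ 1 - 1 / r) (by positivity)]
    rw [sub_add_cancel, ENNReal.ofReal_one]
  have hPG : ENNReal.ofReal (1 - 1 / r) + ENNReal.ofReal (1 / r)
      ≤ P G + ENNReal.ofReal (1 / r) := by
    rw [h1r]
    exact huniv.trans (add_le_add le_rfl hcompl)
  exact (ENNReal.add_le_add_iff_right ENNReal.ofReal_ne_top).mp hPG
end

section
/- There exist constants C > 0 and d₀ such that for all d ≥ d₀, all positive integers m ≤ d², and every fixed unit vector u ∈ ℝ^d the following holds: if v⁽¹⁾, …, v⁽ᵐ⁾ are i.i.d. uniformly random points on the unit sphere S^{d−1} ⊆ ℝ^d, then Pr( #{ i : (u·v⁽ⁱ⁾)² > d^{−1/4} } > C·d^{1/4} ) ≤ 2^{−d}. -/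
open MeasureTheory Metric ProbabilityTheory
open Set
open scoped Pointwise ENNReal

-- total mass
lemma toSphere_univ_eq (d : ℕ) :
    (volume : Measure (EuclideanSpace ℝ (Fin d))).toSphere Set.univ
      = d * volume (ball (0 : EuclideanSpace ℝ (Fin d)) 1) := by
  rw [Measure.toSphere_apply_univ, finrank_euclideanSpace_fin]

lemma isProb_uniformSphere {d : ℕ} (hd : 1 ≤ d) : IsProbabilityMeasure (uniformSphere d) := by
  constructor
  have hball₀ : volume (ball (0 : EuclideanSpace ℝ (Fin d)) 1) ≠ 0 :=
    (measure_ball_pos _ _ one_pos).ne'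
  have hballt : volume (ball (0 : EuclideanSpace ℝ (Fin d)) 1) ≠ ⊤ :=
    measure_ball_lt_top.ne
  have hc0 : (volume : Measure (EuclideanSpace ℝ (Fin d))).toSphere Set.univ ≠ 0 := by
    rw [toSphere_univ_eq]
    simp only [ne_eq, mul_eq_zero, not_or]
    exact ⟨Nat.cast_ne_zero.mpr (by omega), hball₀⟩
  have hct : (volume : Measure (EuclideanSpace ℝ (Fin d))).toSphere Set.univ ≠ ⊤ := by
    rw [toSphere_univ_eq]
    exact ENNReal.mul_ne_top (ENNReal.natCast_ne_top d) hballt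
  rw [uniformSphere, Measure.smul_apply, Measure.map_apply measurable_subtype_coe .univ]
  simp only [preimage_univ, smul_eq_mul]
  exact ENNReal.inv_mul_cancel hc0 hct

lemma cone_subset {d : ℕ} (u : EuclideanSpace ℝ (Fin d)) (hu : ‖u‖ = 1)
    {t : ℝ} (ht0 : 0 < t) (ht : t < 1/2) :
    (Set.Ioo (0:ℝ) 1) • ((Subtype.val '' (Subtype.val ⁻¹'
        {x : EuclideanSpace ℝ (Fin d) | t < (∑ k, u k * x k) ^ 2} :
          Set (sphere (0 : EuclideanSpace ℝ (Fin d)) 1))))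
      ⊆ ball ((Real.sqrt t) • u) (Real.sqrt (1 - t))
        ∪ ball ((-Real.sqrt t) • u) (Real.sqrt (1 - t)) := by
  set s := Real.sqrt t with hs
  set ρ := Real.sqrt (1 - t) with hρ
  have hs0 : 0 < s := Real.sqrt_pos.mpr ht0
  have hs2 : s ^ 2 = t := Real.sq_sqrt ht0.le
  have hρ0 : 0 ≤ ρ := Real.sqrt_nonneg _
  have hρ2 : ρ ^ 2 = 1 - t := Real.sq_sqrt (by linarith)
  rintro x hx
  rw [Set.mem_smul] at hx
  obtain ⟨r, hr, y, hy, rfl⟩ := hx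
  obtain ⟨v, hv, rfl⟩ := hy
  have hyn : ‖(v : EuclideanSpace ℝ (Fin d))‖ = 1 := by
    simpa using mem_sphere_zero_iff_norm.mp v.2
  have hvA : t < (∑ k, u k * (v : EuclideanSpace ℝ (Fin d)) k) ^ 2 := hv
  have hinner : (∑ k, u k * (v : EuclideanSpace ℝ (Fin d)) k)
      = inner ℝ u (v : EuclideanSpace ℝ (Fin d)) := by
    simp [PiLp.inner_apply, RCLike.inner_apply, conj_trivial, mul_comm]
  set c : ℝ := inner ℝ u (v : EuclideanSpace ℝ (Fin d)) with hc
  rw [hinner] at hvA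
  have hr0 : 0 < r := hr.1
  have hr1 : r < 1 := hr.2
  -- key quadratic bound
  have key : r ^ 2 - 2 * r * t + t < 1 - t := by
    rcases le_or_gt r (2*t) with h | h
    · nlinarith
    · nlinarith
  have habs : s < |c| := by
    have : s ^ 2 < |c| ^ 2 := by rw [hs2, sq_abs]; exact hvA
    exact lt_of_pow_lt_pow_left₀ 2 (abs_nonneg _) this
  have hnormsmul : ‖r • (v : EuclideanSpace ℝ (Fin d))‖ = r := by
    rw [norm_smul, hyn, Real.norm_eq_abs, abs_of_pos hr0, mul_one]
  rcases le_or_gt 0 c with hcpos | hcneg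
  · left
    have hcc : s < c := lt_of_lt_of_le habs (le_of_eq (abs_of_nonneg hcpos))
    rw [mem_ball_iff_norm]
    have hsq : ‖r • (v : EuclideanSpace ℝ (Fin d)) - s • u‖ ^ 2 < ρ ^ 2 := by
      rw [norm_sub_sq_real, hnormsmul, norm_smul, hu, Real.norm_eq_abs,
        abs_of_pos hs0, mul_one, real_inner_smul_left, real_inner_smul_right,
        real_inner_comm, ← hc, hρ2]
      have : s * c > t := by nlinarith
      nlinarith
    have := lt_of_pow_lt_pow_left₀ 2 hρ0 hsq
    simpa using this
  · right
    have hcc : c < -s := by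
      rw [abs_of_neg hcneg] at habs; linarith
    rw [mem_ball_iff_norm]
    have hsq : ‖r • (v : EuclideanSpace ℝ (Fin d)) - (-s) • u‖ ^ 2 < ρ ^ 2 := by
      rw [norm_sub_sq_real, hnormsmul, norm_smul, hu, Real.norm_eq_abs,
        abs_of_neg (by linarith : -s < 0), mul_one, real_inner_smul_left,
        real_inner_smul_right, real_inner_comm, ← hc, hρ2]
      have : s * c < -t := by nlinarith
      nlinarith
    have := lt_of_pow_lt_pow_left₀ 2 hρ0 hsq
    simpa using this

lemma cap_bound {d : ℕ} (hd : 1 ≤ d) (u : EuclideanSpace ℝ (Fin d)) (hu : ‖u‖ = 1)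
    {t : ℝ} (ht0 : 0 < t) (ht : t < 1/2) :
    uniformSphere d {x : EuclideanSpace ℝ (Fin d) | t < (∑ k, u k * x k) ^ 2}
      ≤ ENNReal.ofReal (2 * Real.sqrt (1 - t) ^ d) := by
  haveI : Nonempty (Fin d) := ⟨⟨0, hd⟩⟩
  set A := {x : EuclideanSpace ℝ (Fin d) | t < (∑ k, u k * x k) ^ 2} with hA
  have hAm : MeasurableSet A := by
    have hcont : Continuous fun x : EuclideanSpace ℝ (Fin d) => (∑ k, u k * x k) ^ 2 := by
      fun_prop
    exact measurableSet_lt measurable_const hcont.measurable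
  set B := volume (ball (0 : EuclideanSpace ℝ (Fin d)) 1) with hB
  have hball₀ : B ≠ 0 := (measure_ball_pos _ _ one_pos).ne'
  have hballt : B ≠ ⊤ := measure_ball_lt_top.ne
  have hmap : Measure.map Subtype.val
      ((volume : Measure (EuclideanSpace ℝ (Fin d))).toSphere) A
      = (volume : Measure (EuclideanSpace ℝ (Fin d))).toSphere (Subtype.val ⁻¹' A) :=
    Measure.map_apply measurable_subtype_coe hAm
  have happly := (volume : Measure (EuclideanSpace ℝ (Fin d))).toSphere_apply'
    (s := (Subtype.val ⁻¹' A : Set (sphere (0 : EuclideanSpace ℝ (Fin d)) 1)))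
    (hAm.preimage measurable_subtype_coe)
  have hcone := cone_subset u hu ht0 ht
  have hvol : volume ((Set.Ioo (0:ℝ) 1) • ((Subtype.val '' (Subtype.val ⁻¹' A :
        Set (sphere (0 : EuclideanSpace ℝ (Fin d)) 1)))))
      ≤ ENNReal.ofReal (2 * Real.sqrt (1 - t) ^ d) * B := by
    refine le_trans (measure_mono hcone) ?_
    refine le_trans (measure_union_le _ _) ?_
    rw [Measure.addHaar_ball _ _ (Real.sqrt_nonneg _),
      Measure.addHaar_ball _ _ (Real.sqrt_nonneg _), finrank_euclideanSpace_fin, ← hB]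
    rw [← add_mul, ← ENNReal.ofReal_add (by positivity) (by positivity)]
    rw [two_mul]
  have hc0 : ((d : ℝ≥0∞) * B) ≠ 0 := by
    simp only [ne_eq, mul_eq_zero, not_or]
    exact ⟨Nat.cast_ne_zero.mpr (by omega), hball₀⟩
  have hct : ((d : ℝ≥0∞) * B) ≠ ⊤ := ENNReal.mul_ne_top (ENNReal.natCast_ne_top d) hballt
  calc uniformSphere d A
      = ((d : ℝ≥0∞) * B)⁻¹ *
          ((volume : Measure (EuclideanSpace ℝ (Fin d))).toSphere (Subtype.val ⁻¹' A)) := by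
        rw [uniformSphere, Measure.smul_apply, smul_eq_mul, hmap, toSphere_univ_eq]
    _ ≤ ((d : ℝ≥0∞) * B)⁻¹ * ((d : ℝ≥0∞) * (ENNReal.ofReal (2 * Real.sqrt (1 - t) ^ d) * B)) := by
        gcongr
        rw [happly, finrank_euclideanSpace_fin]
        gcongr
    _ = ENNReal.ofReal (2 * Real.sqrt (1 - t) ^ d) := by
        rw [show (d : ℝ≥0∞) * (ENNReal.ofReal (2 * Real.sqrt (1 - t) ^ d) * B)
            = ((d : ℝ≥0∞) * B) * ENNReal.ofReal (2 * Real.sqrt (1 - t) ^ d) by ring]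
        rw [← mul_assoc, ENNReal.inv_mul_cancel hc0 hct, one_mul]

open scoped Classical in
lemma count_bound {X : Type*} [MeasurableSpace X] (μ : Measure X) [IsProbabilityMeasure μ]
    (A : Set X) (m k : ℕ) :
    (Measure.pi fun _ : Fin m => μ)
        {v : Fin m → X | k ≤ (Finset.univ.filter fun i => v i ∈ A).card}
      ≤ (m.choose k : ℝ≥0∞) * (μ A) ^ k := by
  have hsub : {v : Fin m → X | k ≤ (Finset.univ.filter fun i => v i ∈ A).card}
      ⊆ ⋃ S ∈ Finset.univ.powersetCard k,
          Set.univ.pi (fun i : Fin m => if i ∈ S then A else Set.univ) := by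
    intro v hv
    obtain ⟨S, hSsub, hScard⟩ := Finset.exists_subset_card_eq hv
    refine Set.mem_iUnion₂.mpr ⟨S, Finset.mem_powersetCard.mpr ⟨Finset.subset_univ _, hScard⟩, ?_⟩
    intro i _
    by_cases hi : i ∈ S
    · simp only [hi, if_true]
      have := hSsub hi
      exact (Finset.mem_filter.mp this).2
    · simp [hi]
  refine le_trans (measure_mono hsub) ?_
  refine le_trans (measure_biUnion_finset_le _ _) ?_
  have heach : ∀ S ∈ Finset.univ.powersetCard k,
      (Measure.pi fun _ : Fin m => μ)
        (Set.univ.pi (fun i : Fin m => if i ∈ S then A else Set.univ)) = (μ A) ^ k := by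
    intro S hS
    rw [Measure.pi_pi]
    have : ∀ i : Fin m, μ (if i ∈ S then A else Set.univ) = if i ∈ S then μ A else 1 := by
      intro i; by_cases hi : i ∈ S <;> simp [hi]
    simp_rw [this]
    rw [Finset.prod_ite_mem, Finset.univ_inter, Finset.prod_const,
      (Finset.mem_powersetCard.mp hS).2]
  rw [Finset.sum_congr rfl heach, Finset.sum_const, Finset.card_powersetCard,
    Finset.card_univ, Fintype.card_fin, nsmul_eq_mul]

lemma numeric_bound {d k : ℕ} (hd : 4096 ≤ d) {q t ρ : ℝ}
    (hq : q = (d:ℝ) ^ ((1:ℝ)/4)) (ht : t = (d:ℝ) ^ (-(1:ℝ)/4))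
    (hρ : ρ = Real.sqrt (1 - t)) (hk : 8 * q ≤ (k : ℝ)) :
    ((d:ℝ)^2 * (2 * ρ ^ d)) ^ k ≤ (2:ℝ) ^ (-(d:ℝ)) := by
  have hd0 : (0:ℝ) < d := by positivity
  have hq0 : 0 < q := by rw [hq]; positivity
  have hq8 : 8 ≤ q := by
    rw [hq]
    calc (8:ℝ) = (4096:ℝ) ^ ((1:ℝ)/4) := by
          rw [show (4096:ℝ) = 8 ^ (4:ℕ) by norm_num, ← Real.rpow_natCast 8 4,
            ← Real.rpow_mul (by norm_num)]
          norm_num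
      _ ≤ (d:ℝ) ^ ((1:ℝ)/4) := by
          apply Real.rpow_le_rpow (by norm_num) _ (by norm_num)
          exact_mod_cast hd
  have hq4 : q ^ 4 = (d:ℝ) := by
    rw [hq, ← Real.rpow_natCast ((d:ℝ) ^ ((1:ℝ)/4)) 4, ← Real.rpow_mul hd0.le]
    norm_num
  have htq : t * q = 1 := by
    rw [ht, hq, ← Real.rpow_add hd0]
    norm_num
  have ht0 : 0 < t := by rw [ht]; positivity
  have ht2 : t < 1/2 := by nlinarith
  have hρ0 : 0 < ρ := by rw [hρ]; exact Real.sqrt_pos.mpr (by linarith)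
  have hlogρ : Real.log ρ ≤ -t/2 := by
    rw [hρ, Real.log_sqrt (by linarith)]
    have := Real.log_le_sub_one_of_pos (show (0:ℝ) < 1 - t by linarith)
    linarith
  have hlog2 : Real.log 2 ≤ 1 := by
    have := Real.log_le_sub_one_of_pos (show (0:ℝ) < 2 by norm_num); linarith
  have hlogq : Real.log q ≤ q - 1 := Real.log_le_sub_one_of_pos hq0
  have hlogd : Real.log d = 4 * Real.log q := by
    rw [← hq4, Real.log_pow]; push_cast; ring
  set base := (d:ℝ)^2 * (2 * ρ ^ d) with hbase
  have hbase0 : 0 < base := by positivity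
  have hlogbase : Real.log base ≤ -(q^3/4) := by
    rw [hbase, Real.log_mul (by positivity) (by positivity),
      Real.log_mul (by norm_num) (by positivity), Real.log_pow, Real.log_pow]
    have hdlogρ : (d:ℝ) * Real.log ρ ≤ -(q^3)/2 := by
      have h1 : (d:ℝ) * Real.log ρ ≤ (d:ℝ) * (-t/2) := by
        apply mul_le_mul_of_nonneg_left hlogρ hd0.le
      have h2 : (d:ℝ) * (-t/2) = -(q^3)/2 := by
        rw [← hq4]; nlinarith [htq]
      linarith
    rw [hlogd]
    push_cast
    have hq3 : 64 * q ≤ q ^ 3 := by nlinarith [mul_nonneg (mul_nonneg hq0.le (by linarith : (0:ℝ) ≤ q - 8)) (by linarith : (0:ℝ) ≤ q + 8)]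
    linarith [hdlogρ, hlogq, hlog2, hq8, hq3]
  have hbasele : base ≤ Real.exp (-(q^3/4)) := by
    calc base = Real.exp (Real.log base) := (Real.exp_log hbase0).symm
      _ ≤ Real.exp (-(q^3/4)) := Real.exp_le_exp.mpr hlogbase
  calc base ^ k ≤ (Real.exp (-(q^3/4))) ^ k := pow_le_pow_left₀ hbase0.le hbasele k
    _ = Real.exp ((k:ℝ) * (-(q^3/4))) := by rw [← Real.exp_nat_mul]
    _ ≤ Real.exp (-(2 * (d:ℝ))) := by
        apply Real.exp_le_exp.mpr
        rw [← hq4]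
        nlinarith [hk, hq8]
    _ ≤ (2:ℝ) ^ (-(d:ℝ)) := by
        rw [Real.rpow_def_of_pos (by norm_num : (0:ℝ) < 2)]
        apply Real.exp_le_exp.mpr
        nlinarith [hlog2, hd0, Real.log_pos (by norm_num : (1:ℝ) < 2)]

/-- There are `C > 0` and `d₀` such that for all `d ≥ d₀`, all positive `m ≤ d²`, and every
unit vector `u`: if `v⁽¹⁾,…,v⁽ᵐ⁾` are i.i.d. uniform on the sphere, then
`Pr(#{i : (u·v⁽ⁱ⁾)² > d^{−1/4}} > C·d^{1/4}) ≤ 2^{−d}`. -/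
theorem few_heavy_coordinates :
    ∃ C : ℝ, 0 < C ∧ ∃ d₀ : ℕ, ∀ d : ℕ, d₀ ≤ d → ∀ m : ℕ, 1 ≤ m → m ≤ d ^ 2 →
      ∀ u : EuclideanSpace ℝ (Fin d), ‖u‖ = 1 →
        (Measure.pi fun _ : Fin m => uniformSphere d)
            {v : Fin m → EuclideanSpace ℝ (Fin d) |
              C * (d : ℝ) ^ ((1 : ℝ) / 4) <
                ((Finset.univ.filter fun i : Fin m =>
                  (d : ℝ) ^ (-(1 : ℝ) / 4) < (∑ k, u k * v i k) ^ 2).card : ℝ)} ≤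
          ENNReal.ofReal ((2 : ℝ) ^ (-(d : ℝ))) := by
  classical
  refine ⟨8, by norm_num, 4096, fun d hd m hm1 hm2 u hu => ?_⟩
  haveI : IsProbabilityMeasure (uniformSphere d) := isProb_uniformSphere (by omega)
  have hd0 : (0:ℝ) < d := by positivity
  set t : ℝ := (d:ℝ) ^ (-(1:ℝ)/4) with htdef
  set q : ℝ := (d:ℝ) ^ ((1:ℝ)/4) with hqdef
  set ρ : ℝ := Real.sqrt (1 - t) with hρdef
  have hq8 : 8 ≤ q := by
    rw [hqdef]
    calc (8:ℝ) = (4096:ℝ) ^ ((1:ℝ)/4) := by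
          rw [show (4096:ℝ) = 8 ^ (4:ℕ) by norm_num, ← Real.rpow_natCast 8 4,
            ← Real.rpow_mul (by norm_num)]
          norm_num
      _ ≤ (d:ℝ) ^ ((1:ℝ)/4) := by
          apply Real.rpow_le_rpow (by norm_num) _ (by norm_num)
          exact_mod_cast hd
  have htq : t * q = 1 := by
    rw [htdef, hqdef, ← Real.rpow_add hd0]
    norm_num
  have ht0 : 0 < t := by rw [htdef]; positivity
  have ht2 : t < 1/2 := by nlinarith
  set A : Set (EuclideanSpace ℝ (Fin d)) :=
    {x | t < (∑ k, u k * x k) ^ 2} with hAdef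
  set n : ℕ := ⌊(8:ℝ) * q⌋₊ + 1 with hndef
  have hKn : 8 * q ≤ (n:ℝ) := by
    have := Nat.lt_floor_add_one ((8:ℝ) * q)
    rw [hndef]; push_cast; linarith
  have hsub : {v : Fin m → EuclideanSpace ℝ (Fin d) |
        8 * (d : ℝ) ^ ((1 : ℝ) / 4) <
          ((Finset.univ.filter fun i : Fin m =>
            (d : ℝ) ^ (-(1 : ℝ) / 4) < (∑ k, u k * v i k) ^ 2).card : ℝ)}
      ⊆ {v : Fin m → EuclideanSpace ℝ (Fin d) |
          n ≤ (Finset.univ.filter fun i => v i ∈ A).card} := by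
    intro v hv
    simp only [Set.mem_setOf_eq] at hv ⊢
    have hfeq : (Finset.univ.filter fun i : Fin m =>
          (d : ℝ) ^ (-(1 : ℝ) / 4) < (∑ k, u k * v i k) ^ 2)
        = (Finset.univ.filter fun i => v i ∈ A) := by
      apply Finset.filter_congr
      intro i _
      rw [hAdef]
      exact Iff.rfl
    rw [hfeq] at hv
    have hfloor : ⌊(8:ℝ) * q⌋₊ < (Finset.univ.filter fun i => v i ∈ A).card :=
      (Nat.floor_lt (by positivity)).mpr hv
    omega
  refine le_trans (measure_mono hsub) ?_
  refine le_trans (count_bound (uniformSphere d) A m n) ?_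
  have hcap : uniformSphere d A ≤ ENNReal.ofReal (2 * ρ ^ d) :=
    cap_bound (by omega) u hu ht0 ht2
  have hchoose : (m.choose n : ℝ≥0∞) ≤ (((d^2 : ℕ) : ℝ≥0∞)) ^ n := by
    have h1 : m.choose n ≤ (d^2) ^ n :=
      le_trans (Nat.choose_le_pow m n) (Nat.pow_le_pow_left hm2 n)
    exact_mod_cast Nat.cast_le.mpr h1
  calc (m.choose n : ℝ≥0∞) * (uniformSphere d A) ^ n
      ≤ (((d^2 : ℕ) : ℝ≥0∞)) ^ n * (ENNReal.ofReal (2 * ρ ^ d)) ^ n := by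
        gcongr
    _ = ENNReal.ofReal (((d:ℝ)^2 * (2 * ρ ^ d)) ^ n) := by
        have e1 : (((d^2:ℕ)):ℝ≥0∞) = ENNReal.ofReal ((d:ℝ)^2) := by
          rw [← ENNReal.ofReal_natCast (d^2)]
          congr 1
          push_cast; ring
        rw [e1, ← ENNReal.ofReal_pow (by positivity), ← ENNReal.ofReal_pow (by positivity),
          ← ENNReal.ofReal_mul (by positivity), ← mul_pow]
    _ ≤ ENNReal.ofReal ((2:ℝ) ^ (-(d:ℝ))) := by
        apply ENNReal.ofReal_le_ofReal
        exact numeric_bound hd hqdef htdef hρdef hKn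
end

section
/- There exist a constant C > 0 and d₀ such that for all d ≥ d₀ and every fixed unit vector u ∈ ℝ^d the following holds: if v is a uniformly random point on the unit sphere S^{d−1} ⊆ ℝ^d and α = d^{9/8}, then E[ exp( min( α·(u·v)⁴, α·d^{−1/2} ) ) ] ≤ 1 + C·α/d². -/
open MeasureTheory Metric ProbabilityTheory

namespace LightMGF

open Real Set Filter Topology
open scoped ENNReal

/-- Half-line Gaussian moment integral. -/
noncomputable def gI (k : ℕ) : ℝ := ∫ r in Ioi (0:ℝ), r ^ k * Real.exp (-r ^ 2 / 2)

/-- Full-line Gaussian moment integral. -/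
noncomputable def gG (k : ℕ) : ℝ := ∫ x : ℝ, x ^ k * Real.exp (-x ^ 2 / 2)

lemma integrableOn_pow_gauss (k : ℕ) :
    IntegrableOn (fun x : ℝ => x ^ k * Real.exp (-x ^ 2 / 2)) (Ioi 0) := by
  have h := integrableOn_rpow_mul_exp_neg_mul_sq (b := 1/2) one_half_pos
    (s := (k : ℝ)) (lt_of_lt_of_le neg_one_lt_zero (Nat.cast_nonneg k))
  refine h.congr_fun (fun x hx => ?_) measurableSet_Ioi
  dsimp only
  rw [Real.rpow_natCast, show -(1/2 : ℝ) * x ^ 2 = -x ^ 2 / 2 by ring]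

lemma integrable_pow_gauss {k : ℕ} (hk : Even k) :
    Integrable (fun x : ℝ => x ^ k * Real.exp (-x ^ 2 / 2)) := by
  rw [← integrableOn_univ, ← Set.Iic_union_Ioi (a := (0:ℝ)), integrableOn_union]
  refine ⟨?_, integrableOn_pow_gauss k⟩
  rw [← (Measure.measurePreserving_neg (volume : Measure ℝ)).integrableOn_comp_preimage
      (Homeomorph.neg ℝ).measurableEmbedding]
  simp only [Function.comp_def, hk.neg_pow, neg_sq, neg_preimage, neg_Iic, neg_zero]
  rw [integrableOn_Ici_iff_integrableOn_Ioi]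
  exact integrableOn_pow_gauss k

lemma gI_pos (k : ℕ) : 0 < gI k := by
  rw [gI, setIntegral_pos_iff_support_of_nonneg_ae]
  · have : Ioi (0:ℝ) ⊆ Function.support fun x : ℝ => x ^ k * Real.exp (-x ^ 2 / 2) := by
      intro x hx
      have hx' : (0:ℝ) < x := hx
      simp only [Function.mem_support]
      positivity
    calc (0 : ℝ≥0∞) < volume (Ioi (0:ℝ)) := by simp
      _ ≤ volume ((Function.support fun x : ℝ => x ^ k * Real.exp (-x ^ 2 / 2)) ∩ Ioi 0) := by
          rw [Set.inter_eq_right.mpr this]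
  · filter_upwards [ae_restrict_mem measurableSet_Ioi] with x hx
    have hx' : (0:ℝ) < x := hx
    positivity
  · exact integrableOn_pow_gauss k

lemma gI_succ (k : ℕ) : gI (k + 2) = (k + 1 : ℝ) * gI k := by
  have hF : ∀ x : ℝ, HasDerivAt (fun y : ℝ => -(y ^ (k+1) * Real.exp (-y ^ 2 / 2)))
      (x ^ (k+2) * Real.exp (-x ^ 2 / 2) - (k + 1 : ℝ) * (x ^ k * Real.exp (-x ^ 2 / 2))) x := by
    intro x
    have h1 : HasDerivAt (fun y : ℝ => y ^ (k+1)) ((k+1 : ℝ) * x ^ k) x := by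
      simpa using hasDerivAt_pow (k+1) x
    have h0 : HasDerivAt (fun y : ℝ => -y ^ 2 / 2) (-x) x := by
      have := ((hasDerivAt_pow 2 x).neg.div_const 2)
      simpa using this.congr_deriv (by ring)
    have h2 : HasDerivAt (fun y : ℝ => Real.exp (-y ^ 2 / 2))
        (Real.exp (-x ^ 2 / 2) * (-x)) x := h0.exp
    have : HasDerivAt (fun y : ℝ => -(y ^ (k+1) * Real.exp (-y ^ 2 / 2)))
        (-(((k+1 : ℝ) * x ^ k) * Real.exp (-x ^ 2 / 2) + x ^ (k+1) * (Real.exp (-x ^ 2 / 2) * (-x)))) x :=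
      (h1.mul h2).neg
    convert this using 1
    ring
  have htend : Tendsto (fun y : ℝ => -(y ^ (k+1) * Real.exp (-y ^ 2 / 2))) atTop (𝓝 0) := by
    apply squeeze_zero_norm' ?_ (tendsto_pow_mul_exp_neg_atTop_nhds_zero (k+1))
    filter_upwards [eventually_ge_atTop (2:ℝ)] with x hx
    have hx0 : (0:ℝ) ≤ x := by linarith
    have h1 : Real.exp (-x ^ 2 / 2) ≤ Real.exp (-x) := by
      apply Real.exp_le_exp.2; nlinarith
    rw [norm_neg, norm_mul, norm_pow, Real.norm_eq_abs, Real.norm_eq_abs,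
      abs_of_nonneg hx0, abs_of_nonneg (Real.exp_pos _).le]
    exact mul_le_mul_of_nonneg_left h1 (by positivity)
  have hint : IntegrableOn (fun x : ℝ =>
      x ^ (k+2) * Real.exp (-x ^ 2 / 2) - (k + 1 : ℝ) * (x ^ k * Real.exp (-x ^ 2 / 2)))
      (Ioi (0:ℝ)) := (integrableOn_pow_gauss (k+2)).sub ((integrableOn_pow_gauss k).const_mul _)
  have key := integral_Ioi_of_hasDerivAt_of_tendsto
    (f := fun y : ℝ => -(y ^ (k+1) * Real.exp (-y ^ 2 / 2)))
    (Continuous.continuousWithinAt (by continuity)) (fun x _ => hF x) hint htend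
  have : gI (k+2) - (k + 1 : ℝ) * gI k = 0 := by
    rw [gI, gI, ← integral_const_mul, ← integral_sub (integrableOn_pow_gauss (k+2))
      ((integrableOn_pow_gauss k).const_mul _)]
    rw [key]; simp
  linarith

lemma gG_eq (m : ℕ) : gG (2*m) = 2 * gI (2*m) := by
  have hk : Even (2*m) := even_two_mul m
  have hsplit := intervalIntegral.integral_Iic_add_Ioi (b := (0:ℝ))
    ((integrable_pow_gauss hk).integrableOn) ((integrable_pow_gauss hk).integrableOn)
  have hneg : ∫ x in Iic (0:ℝ), x ^ (2*m) * Real.exp (-x^2/2)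
      = ∫ x in Ioi (0:ℝ), x ^ (2*m) * Real.exp (-x^2/2) := by
    have := integral_comp_neg_Ioi (0:ℝ) (fun x : ℝ => x ^ (2*m) * Real.exp (-x ^ 2 / 2))
    simp only [neg_zero] at this
    rw [← this]
    congr 1; funext x; simp [hk.neg_pow, neg_sq]
  rw [gG, ← hsplit, hneg, gI]; ring

lemma gG_pos (m : ℕ) : 0 < gG (2*m) := by rw [gG_eq]; linarith [gI_pos (2*m)]

lemma gI_lower (p m : ℕ) : ((p:ℝ) + 1) ^ m * gI p ≤ gI (p + 2*m) := by
  induction m with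
  | zero => simp
  | succ n ih =>
      have : p + 2*(n+1) = (p + 2*n) + 2 := by ring
      rw [this, gI_succ]
      have h1 : ((p:ℝ) + 1) * (((p:ℝ) + 1) ^ n * gI p) ≤ ((p:ℝ) + 1) * gI (p + 2*n) :=
        mul_le_mul_of_nonneg_left ih (by positivity)
      have h2 : ((p:ℝ) + 1) * gI (p + 2*n) ≤ ((p:ℕ) + 2*n + 1 : ℝ) * gI (p + 2*n) := by
        apply mul_le_mul_of_nonneg_right _ (gI_pos _).le
        push_cast; linarith [Nat.cast_nonneg (α := ℝ) n]
      calc ((p:ℝ) + 1) ^ (n+1) * gI p = ((p:ℝ) + 1) * (((p:ℝ)+1)^n * gI p) := by ring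
        _ ≤ ((p:ℕ) + 2*n + 1 : ℝ) * gI (p + 2*n) := h1.trans h2
        _ = (↑(p + 2*n) + 1) * gI (p + 2*n) := by push_cast; ring

lemma gG_upper (m : ℕ) : gG (2*m) ≤ (2*(m:ℝ)) ^ m * gG 0 := by
  have key : ∀ j, j ≤ m → gI (2*j) ≤ (2*(m:ℝ)) ^ j * gI 0 := by
    intro j
    induction j with
    | zero => intro _; simp [gI]
    | succ n ih =>
        intro hn
        have h2 : 2*(n+1) = 2*n + 2 := by ring
        rw [h2, gI_succ]
        have hle : (2*(n:ℝ) + 1) ≤ 2*(m:ℝ) := by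
          have : (n:ℝ) + 1 ≤ (m:ℝ) := by exact_mod_cast hn
          linarith
        calc ((2*n : ℕ) + 1 : ℝ) * gI (2*n) ≤ (2*(m:ℝ)) * gI (2*n) := by
              apply mul_le_mul_of_nonneg_right _ (gI_pos _).le
              push_cast; exact hle
          _ ≤ (2*(m:ℝ)) * ((2*(m:ℝ))^n * gI 0) := by
              apply mul_le_mul_of_nonneg_left (ih (by omega)) (by positivity)
          _ = (2*(m:ℝ))^(n+1) * gI 0 := by ring
  have h0 : gG 0 = 2 * gI 0 := by simpa using gG_eq 0
  rw [gG_eq, h0]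
  calc 2 * gI (2*m) ≤ 2 * ((2*(m:ℝ))^m * gI 0) := by
        linarith [key m le_rfl]
    _ = (2*(m:ℝ))^m * (2 * gI 0) := by ring

end LightMGF

namespace LightMGF2
open Real Set Filter Topology LightMGF
open scoped ENNReal

variable {d : ℕ}

lemma gauss_moment (hd : 1 ≤ d) (u : EuclideanSpace ℝ (Fin d)) (hu : ‖u‖ = 1) (m : ℕ) :
    ∫ x : EuclideanSpace ℝ (Fin d), (inner ℝ u x : ℝ) ^ (2*m) * Real.exp (-‖x‖ ^ 2 / 2)
      = gG (2*m) * gG 0 ^ (d - 1) := by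
  classical
  set i0 : Fin d := ⟨0, hd⟩ with hi0
  set e0 : EuclideanSpace ℝ (Fin d) := EuclideanSpace.single i0 (1:ℝ) with he0
  have hnorm : ‖e0‖ = 1 := by rw [he0, EuclideanSpace.norm_single]; norm_num
  set T := Submodule.reflection (ℝ ∙ (u - e0))ᗮ with hT
  have hTu : T u = e0 := Submodule.reflection_sub (by rw [hu, hnorm])
  set f : Fin d → ℝ → ℝ := fun i => if i = i0 then
      (fun t : ℝ => t ^ (2*m) * Real.exp (-t^2/2))
    else (fun t : ℝ => Real.exp (-t^2/2)) with hf
  have h1 : ∫ x : EuclideanSpace ℝ (Fin d), (inner ℝ u x : ℝ) ^ (2*m) * Real.exp (-‖x‖ ^ 2 / 2)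
      = ∫ x : EuclideanSpace ℝ (Fin d), (x i0) ^ (2*m) * Real.exp (-‖x‖ ^ 2 / 2) := by
    rw [← (T.symm.measurePreserving).integral_comp
        T.symm.toHomeomorph.measurableEmbedding
        (fun x : EuclideanSpace ℝ (Fin d) => (inner ℝ u x : ℝ) ^ (2*m) * Real.exp (-‖x‖ ^ 2 / 2))]
    congr 1
    funext x
    have hinner : (inner ℝ u (T.symm x) : ℝ) = x i0 := by
      calc (inner ℝ u (T.symm x) : ℝ) = (inner ℝ (T u) (T (T.symm x)) : ℝ) :=
            (T.inner_map_map u (T.symm x)).symm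
        _ = (inner ℝ e0 x : ℝ) := by rw [hTu, T.apply_symm_apply]
        _ = x i0 := by rw [he0, EuclideanSpace.inner_single_left]; simp
    rw [hinner, T.symm.norm_map]
  have h2 : ∫ x : EuclideanSpace ℝ (Fin d), (x i0) ^ (2*m) * Real.exp (-‖x‖ ^ 2 / 2)
      = ∫ z : Fin d → ℝ, ∏ i, f i (z i) := by
    rw [← ((EuclideanSpace.volume_preserving_symm_measurableEquiv_toLp (Fin d)).symm).integral_comp'
        (fun x : EuclideanSpace ℝ (Fin d) => (x i0) ^ (2*m) * Real.exp (-‖x‖ ^ 2 / 2))]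
    congr 1
    funext z
    have hz : ∀ i, ((MeasurableEquiv.toLp 2 (Fin d → ℝ)) z) i = z i := fun i => rfl
    have hns : ‖(MeasurableEquiv.toLp 2 (Fin d → ℝ)) z‖ ^ 2 = ∑ i, (z i)^2 := by
      rw [EuclideanSpace.norm_eq, Real.sq_sqrt (by positivity)]
      refine Finset.sum_congr rfl fun i _ => ?_
      rw [hz, Real.norm_eq_abs, sq_abs]
    rw [MeasurableEquiv.symm_symm, hz, hns]
    have hexp : Real.exp (-(∑ i, (z i)^2)/2) = ∏ i, Real.exp (-(z i)^2/2) := by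
      rw [← Real.exp_sum]
      congr 1
      rw [← Finset.sum_div, ← Finset.sum_neg_distrib]
    have hprod : ∏ i, f i (z i) = (z i0) ^ (2*m) * ∏ i, Real.exp (-(z i)^2/2) := by
      rw [← Finset.mul_prod_erase Finset.univ (fun i => f i (z i)) (Finset.mem_univ i0),
        ← Finset.mul_prod_erase Finset.univ (fun i => Real.exp (-(z i)^2/2)) (Finset.mem_univ i0),
        ← mul_assoc]
      have hfi0 : f i0 (z i0) = (z i0) ^ (2*m) * Real.exp (-(z i0)^2/2) := by
        rw [hf]; simp
      rw [hfi0]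
      congr 1
      refine Finset.prod_congr rfl fun i hi => ?_
      rw [hf]; simp [Finset.ne_of_mem_erase hi]
    rw [hprod, hexp]
  have hgG0 : gG 0 = ∫ t : ℝ, Real.exp (-t^2/2) := by
    rw [gG]; congr 1; funext t; rw [pow_zero, one_mul]
  rw [h1, h2, integral_fintype_prod_volume_eq_prod f,
    ← Finset.mul_prod_erase Finset.univ (fun i => ∫ t, f i t) (Finset.mem_univ i0)]
  have herased : ∀ i ∈ Finset.univ.erase i0, (∫ t, f i t) = gG 0 := by
    intro i hi
    rw [hf]
    simp only [if_neg (Finset.ne_of_mem_erase hi)]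
    rw [hgG0]
  rw [Finset.prod_congr rfl herased, Finset.prod_const,
    Finset.card_erase_of_mem (Finset.mem_univ i0), Finset.card_univ, Fintype.card_fin]
  have hfi0 : (∫ t, f i0 t) = gG (2*m) := by
    rw [hf]; simp only [if_pos rfl]; rfl
  rw [hfi0]

lemma sphere_aux (hd : 1 ≤ d) (u : EuclideanSpace ℝ (Fin d)) (m : ℕ) :
    (∫ y : sphere (0 : EuclideanSpace ℝ (Fin d)) 1,
        (inner ℝ u (y : EuclideanSpace ℝ (Fin d)) : ℝ) ^ (2*m)
        ∂(volume : Measure (EuclideanSpace ℝ (Fin d))).toSphere) * gI (2*m + (d-1))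
      = ∫ x : EuclideanSpace ℝ (Fin d), (inner ℝ u x : ℝ) ^ (2*m) * Real.exp (-‖x‖ ^ 2 / 2) := by
  have hdim : Module.finrank ℝ (EuclideanSpace ℝ (Fin d)) = d := finrank_euclideanSpace_fin
  have hnt : Nontrivial (EuclideanSpace ℝ (Fin d)) := by
    refine ⟨⟨EuclideanSpace.single ⟨0, hd⟩ 1, 0, fun h => ?_⟩⟩
    have := congrArg norm h
    rw [EuclideanSpace.norm_single] at this
    simp at this
  symm
  have step1 : ∫ x : EuclideanSpace ℝ (Fin d), (inner ℝ u x : ℝ) ^ (2*m) * Real.exp (-‖x‖ ^ 2 / 2)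
      = ∫ x : ({(0 : EuclideanSpace ℝ (Fin d))}ᶜ : Set (EuclideanSpace ℝ (Fin d))),
          (inner ℝ u (x : EuclideanSpace ℝ (Fin d)) : ℝ) ^ (2*m)
            * Real.exp (-‖(x : EuclideanSpace ℝ (Fin d))‖ ^ 2 / 2)
          ∂(Measure.comap Subtype.val volume) := by
    rw [integral_subtype_comap (measurableSet_singleton (0 : EuclideanSpace ℝ (Fin d))).compl
      (fun x : EuclideanSpace ℝ (Fin d) =>
        (inner ℝ u x : ℝ) ^ (2*m) * Real.exp (-‖x‖ ^ 2 / 2)),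
      restrict_compl_singleton]
  have hpres := (volume : Measure (EuclideanSpace ℝ (Fin d))).measurePreserving_homeomorphUnitSphereProd
  rw [hdim] at hpres
  have step2 : ∫ x : ({(0 : EuclideanSpace ℝ (Fin d))}ᶜ : Set (EuclideanSpace ℝ (Fin d))),
          (inner ℝ u (x : EuclideanSpace ℝ (Fin d)) : ℝ) ^ (2*m)
            * Real.exp (-‖(x : EuclideanSpace ℝ (Fin d))‖ ^ 2 / 2)
          ∂(Measure.comap Subtype.val volume)
      = ∫ p : sphere (0 : EuclideanSpace ℝ (Fin d)) 1 × Ioi (0:ℝ),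
          (inner ℝ u (p.1 : EuclideanSpace ℝ (Fin d)) : ℝ) ^ (2*m)
            * ((p.2 : ℝ) ^ (2*m) * Real.exp (-(p.2:ℝ) ^ 2 / 2))
          ∂((volume : Measure (EuclideanSpace ℝ (Fin d))).toSphere.prod
              (Measure.volumeIoiPow (d-1))) := by
    rw [← hpres.integral_comp (Homeomorph.measurableEmbedding _)]
    refine integral_congr_ae (Filter.Eventually.of_forall fun x => ?_)
    symm
    have hx : (x : EuclideanSpace ℝ (Fin d)) ≠ 0 := x.2
    have hxn : ‖(x : EuclideanSpace ℝ (Fin d))‖ ≠ 0 := norm_ne_zero_iff.2 hx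
    simp only [homeomorphUnitSphereProd_apply_fst_coe, homeomorphUnitSphereProd_apply_snd_coe]
    rw [real_inner_smul_right, mul_pow]
    have hcancel : (‖(x : EuclideanSpace ℝ (Fin d))‖⁻¹) ^ (2*m)
        * ‖(x : EuclideanSpace ℝ (Fin d))‖ ^ (2*m) = 1 := by
      rw [← mul_pow, inv_mul_cancel₀ hxn, one_pow]
    calc (‖(x : EuclideanSpace ℝ (Fin d))‖⁻¹ ^ (2*m)
          * (inner ℝ u (x : EuclideanSpace ℝ (Fin d)) : ℝ) ^ (2*m))
          * (‖(x : EuclideanSpace ℝ (Fin d))‖ ^ (2*m)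
            * Real.exp (-‖(x : EuclideanSpace ℝ (Fin d))‖ ^ 2 / 2))
        = ((‖(x : EuclideanSpace ℝ (Fin d))‖⁻¹) ^ (2*m)
            * ‖(x : EuclideanSpace ℝ (Fin d))‖ ^ (2*m))
          * ((inner ℝ u (x : EuclideanSpace ℝ (Fin d)) : ℝ) ^ (2*m)
            * Real.exp (-‖(x : EuclideanSpace ℝ (Fin d))‖ ^ 2 / 2)) := by ring
      _ = (inner ℝ u (x : EuclideanSpace ℝ (Fin d)) : ℝ) ^ (2*m)
            * Real.exp (-‖(x : EuclideanSpace ℝ (Fin d))‖ ^ 2 / 2) := by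
          rw [hcancel, one_mul]
  have step3 := integral_prod_mul
    (μ := (volume : Measure (EuclideanSpace ℝ (Fin d))).toSphere)
    (ν := Measure.volumeIoiPow (d-1))
    (f := fun y : sphere (0 : EuclideanSpace ℝ (Fin d)) 1 =>
      (inner ℝ u (y : EuclideanSpace ℝ (Fin d)) : ℝ) ^ (2*m))
    (g := fun r : Ioi (0:ℝ) => (r : ℝ) ^ (2*m) * Real.exp (-(r:ℝ) ^ 2 / 2))
  have step4 : ∫ r : Ioi (0:ℝ), ((r:ℝ) ^ (2*m) * Real.exp (-(r:ℝ)^2/2))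
      ∂(Measure.volumeIoiPow (d-1)) = gI (2*m + (d-1)) := by
    simp only [Measure.volumeIoiPow, ENNReal.ofReal]
    rw [integral_withDensity_eq_integral_smul
      ((measurable_subtype_coe.pow_const _).real_toNNReal)]
    rw [integral_subtype_comap measurableSet_Ioi
      (fun a : ℝ => (a ^ (d-1)).toNNReal • (a ^ (2*m) * Real.exp (-a ^ 2 / 2))), gI]
    refine setIntegral_congr_fun measurableSet_Ioi fun x hx => ?_
    have hx0 : (0:ℝ) ≤ x := le_of_lt hx
    rw [NNReal.smul_def, Real.coe_toNNReal _ (pow_nonneg hx0 _), smul_eq_mul, pow_add]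
    ring
  rw [step1, step2, step3, step4]

end LightMGF2

namespace LightMGF3
open Real Set Filter Topology LightMGF LightMGF2
open scoped ENNReal

variable {d : ℕ}

lemma sphere_moment_eq (hd : 1 ≤ d) (u : EuclideanSpace ℝ (Fin d)) (hu : ‖u‖ = 1) (m : ℕ) :
    (∫ y : sphere (0 : EuclideanSpace ℝ (Fin d)) 1,
        (inner ℝ u (y : EuclideanSpace ℝ (Fin d)) : ℝ) ^ (2*m)
        ∂(volume : Measure (EuclideanSpace ℝ (Fin d))).toSphere)
      = gG (2*m) * gG 0 ^ (d-1) / gI (2*m + (d-1)) := by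
  rw [eq_div_iff (gI_pos _).ne', sphere_aux hd u m, gauss_moment hd u hu m]

lemma gG0_pos : 0 < gG 0 := by simpa using gG_pos 0

lemma toSphere_univ_toReal (hd : 1 ≤ d) :
    (((volume : Measure (EuclideanSpace ℝ (Fin d))).toSphere) Set.univ).toReal
      = gG 0 * gG 0 ^ (d-1) / gI (d-1) := by
  have hu : ‖EuclideanSpace.single (⟨0, hd⟩ : Fin d) (1:ℝ)‖ = 1 := by
    rw [EuclideanSpace.norm_single]; norm_num
  have h := sphere_moment_eq hd _ hu 0
  simpa [integral_const, measureReal_def] using h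

lemma toSphere_univ_toReal_pos (hd : 1 ≤ d) :
    0 < (((volume : Measure (EuclideanSpace ℝ (Fin d))).toSphere) Set.univ).toReal := by
  rw [toSphere_univ_toReal hd]
  have h1 := gG0_pos
  have h2 := gI_pos (d-1)
  positivity

lemma toSphere_univ_ne_zero (hd : 1 ≤ d) :
    ((volume : Measure (EuclideanSpace ℝ (Fin d))).toSphere) Set.univ ≠ 0 := by
  intro h
  have := toSphere_univ_toReal_pos hd
  rw [h] at this
  simp at this

lemma integral_uniformSphere (g : EuclideanSpace ℝ (Fin d) → ℝ) :
    ∫ v, g v ∂(uniformSphere d)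
      = ((((volume : Measure (EuclideanSpace ℝ (Fin d))).toSphere) Set.univ).toReal)⁻¹
        * ∫ y : sphere (0 : EuclideanSpace ℝ (Fin d)) 1, g y
            ∂(volume : Measure (EuclideanSpace ℝ (Fin d))).toSphere := by
  rw [uniformSphere, integral_smul_measure, ENNReal.toReal_inv,
    (MeasurableEmbedding.subtype_coe isClosed_sphere.measurableSet).integral_map, smul_eq_mul]

lemma uniformSphere_isProbability (hd : 1 ≤ d) :
    IsProbabilityMeasure (uniformSphere d) := by
  constructor
  rw [uniformSphere, Measure.smul_apply, Measure.map_apply measurable_subtype_coe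
    MeasurableSet.univ, Set.preimage_univ, smul_eq_mul]
  exact ENNReal.inv_mul_cancel (toSphere_univ_ne_zero hd) (measure_ne_top _ _)

lemma ae_norm_one : ∀ᵐ v ∂(uniformSphere d), ‖v‖ = 1 := by
  rw [ae_iff]
  have hmeas : MeasurableSet {v : EuclideanSpace ℝ (Fin d) | ¬ ‖v‖ = 1} :=
    (measurable_norm (measurableSet_singleton (1:ℝ))).compl
  rw [uniformSphere, Measure.smul_apply, Measure.map_apply measurable_subtype_coe hmeas]
  have hpre : (Subtype.val ⁻¹' {v : EuclideanSpace ℝ (Fin d) | ¬ ‖v‖ = 1}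
      : Set (sphere (0 : EuclideanSpace ℝ (Fin d)) 1)) = ∅ := by
    ext y
    simp only [Set.mem_preimage, Set.mem_setOf_eq, Set.mem_empty_iff_false, iff_false,
      not_not]
    exact mem_sphere_zero_iff_norm.mp y.2
  rw [hpre]
  simp

lemma moment_le (hd : 1 ≤ d) (u : EuclideanSpace ℝ (Fin d)) (hu : ‖u‖ = 1) (m : ℕ) :
    ∫ v, (inner ℝ u v : ℝ) ^ (2*m) ∂(uniformSphere d) ≤ (2*(m:ℝ))^m / (d:ℝ)^m := by
  rw [integral_uniformSphere, sphere_moment_eq hd u hu m, toSphere_univ_toReal hd]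
  have hb : 0 < gG 0 := gG0_pos
  have ha : 0 < gG (2*m) := gG_pos m
  have hI1 : 0 < gI (d-1) := gI_pos _
  have hI2 : 0 < gI (2*m + (d-1)) := gI_pos _
  have hd0 : (0:ℝ) < d := by exact_mod_cast Nat.lt_of_lt_of_le Nat.zero_lt_one hd
  have hIlow : (d:ℝ)^m * gI (d-1) ≤ gI (2*m + (d-1)) := by
    have h := gI_lower (d-1) m
    have hcast : ((d-1 : ℕ):ℝ) + 1 = d := by
      rw [Nat.cast_sub hd]; push_cast; ring
    rw [hcast] at h
    rwa [Nat.add_comm] at h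
  have hup : gG (2*m) ≤ (2*(m:ℝ))^m * gG 0 := gG_upper m
  have key : ((d:ℝ)^m * gI (d-1)) * gG (2*m)
      ≤ gI (2*m + (d-1)) * ((2*(m:ℝ))^m * gG 0) :=
    mul_le_mul hIlow hup ha.le hI2.le
  have hbp : (0:ℝ) < gG 0 ^ (d-1) := pow_pos hb _
  rw [inv_div, div_mul_div_comm, div_le_div_iff₀ (by positivity) (by positivity)]
  nlinarith [mul_le_mul_of_nonneg_right key hbp.le]

end LightMGF3

namespace LightMGF4
open Real LightMGF

lemma exp_min_le {a c : ℝ} (ha : 0 ≤ a) (hc : 0 ≤ c) (N : ℕ) :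
    Real.exp (min a c) ≤ (∑ n ∈ Finset.range N, a^n / n.factorial)
      + c^N * Real.exp c / N.factorial := by
  set b := min a c with hb
  have hb0 : 0 ≤ b := le_min ha hc
  have hba : b ≤ a := min_le_left _ _
  have hbc : b ≤ c := min_le_right _ _
  have hsum : Summable (fun n : ℕ => b^n / n.factorial) := Real.summable_pow_div_factorial b
  have hexpeq : ∀ x : ℝ, Real.exp x = ∑' n : ℕ, x^n / n.factorial := by
    intro x
    rw [Real.exp_eq_exp_ℝ, NormedSpace.exp_eq_tsum_div]
  have hsplit : (∑ n ∈ Finset.range N, b^n / n.factorial)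
      + ∑' n : ℕ, b^(n+N) / (n+N).factorial = Real.exp b := by
    rw [hexpeq b]
    exact (Summable.sum_add_tsum_nat_add N hsum)
  have htail : ∑' n : ℕ, b^(n+N) / (n+N).factorial ≤ c^N * Real.exp c / N.factorial := by
    have hsum1 : Summable (fun n : ℕ => b^(n+N) / (n+N).factorial) :=
      (summable_nat_add_iff N).2 hsum
    have hsum2 : Summable (fun n : ℕ => c^N / N.factorial * (c^n / n.factorial)) :=
      (Real.summable_pow_div_factorial c).mul_left _
    have hle : ∀ n : ℕ, b^(n+N) / (n+N).factorial
        ≤ c^N / N.factorial * (c^n / n.factorial) := by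
      intro n
      have hfact : ((N.factorial : ℝ)) * n.factorial ≤ ((n+N).factorial : ℝ) := by
        exact_mod_cast Nat.le_of_dvd (Nat.factorial_pos _)
          (by rw [Nat.add_comm n N]; exact Nat.factorial_mul_factorial_dvd_factorial_add N n)
      have hbn : b^(n+N) ≤ c^(n+N) := pow_le_pow_left₀ hb0 hbc _
      calc b^(n+N) / (n+N).factorial
          ≤ c^(n+N) / ((N.factorial : ℝ) * n.factorial) := by
            apply div_le_div₀ (pow_nonneg hc _) hbn (by positivity) hfact
        _ = c^N / N.factorial * (c^n / n.factorial) := by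
            rw [pow_add]; field_simp
    calc ∑' n : ℕ, b^(n+N) / (n+N).factorial
        ≤ ∑' n : ℕ, c^N / N.factorial * (c^n / n.factorial) :=
          Summable.tsum_le_tsum hle hsum1 hsum2
      _ = c^N / N.factorial * Real.exp c := by rw [tsum_mul_left, ← hexpeq c]
      _ = c^N * Real.exp c / N.factorial := by ring
  have hfront : (∑ n ∈ Finset.range N, b^n / n.factorial)
      ≤ ∑ n ∈ Finset.range N, a^n / n.factorial := by
    refine Finset.sum_le_sum fun n _ => ?_
    have h : b^n ≤ a^n := pow_le_pow_left₀ hb0 hba n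
    exact div_le_div_of_nonneg_right h (by positivity) |>.trans_eq rfl
  linarith [hsplit, htail, hfront]

end LightMGF4

namespace LightMGF5
open Real LightMGF LightMGF2 LightMGF3 LightMGF4

lemma nat_le_geom (n : ℕ) : (n:ℝ) + 1 ≤ 2 * ((3:ℝ)/2)^n := by
  induction n with
  | zero => norm_num
  | succ k ih =>
      have h1 : (1:ℝ) ≤ ((3:ℝ)/2)^k := one_le_pow₀ (by norm_num)
      push_cast
      rw [pow_succ]
      nlinarith [ih, h1]

lemma geom_le (K : ℕ) : ∑ i ∈ Finset.range K, ((3:ℝ)/4)^i ≤ 4 := by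
  have h : ((3:ℝ)/4) ≠ 1 := by norm_num
  rw [geom_sum_eq h]
  have hp : (0:ℝ) ≤ ((3:ℝ)/4)^K := by positivity
  calc (((3:ℝ)/4)^K - 1)/((3:ℝ)/4 - 1) = 4 * (1 - ((3:ℝ)/4)^K) := by ring
    _ ≤ 4 := by nlinarith [hp]

lemma pow_le_exp_mul_factorial (n : ℕ) :
    ((n:ℝ))^n ≤ Real.exp n * n.factorial := by
  have h : ((n:ℝ))^n / n.factorial ≤ Real.exp n := by
    calc ((n:ℝ))^n / n.factorial
        ≤ ∑ i ∈ Finset.range (n+1), (n:ℝ)^i / i.factorial :=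
          Finset.single_le_sum (f := fun i => (n:ℝ)^i / i.factorial)
            (fun i _ => by positivity) (Finset.self_mem_range_succ n)
      _ ≤ Real.exp n := Real.sum_le_exp_of_nonneg (Nat.cast_nonneg n) (n+1)
  have hf : (0:ℝ) < n.factorial := by exact_mod_cast n.factorial_pos
  rw [div_le_iff₀ hf] at h
  linarith

lemma pow_le_three_pow_mul_factorial (n : ℕ) :
    ((n:ℝ))^n ≤ 3^n * n.factorial := by
  refine (pow_le_exp_mul_factorial n).trans ?_
  have h : Real.exp (n:ℝ) ≤ 3^n := by
    rw [← Real.exp_one_pow]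
    exact pow_le_pow_left₀ (Real.exp_pos 1).le
      (le_trans Real.exp_one_lt_d9.le (by norm_num)) n
  have hf : (0:ℝ) ≤ n.factorial := by positivity
  nlinarith [h, hf, Real.exp_pos (n:ℝ)]

lemma term_bound (α dR : ℝ) (hα : 0 ≤ α) (hdR : 1 ≤ dR) (k N : ℕ) (hn : k + 1 ≤ N)
    (hq : 48 * α / dR^2 * N ≤ 1/2) :
    α^(k+1) * (4*((k:ℝ)+1))^(2*(k+1)) / (((k+1).factorial : ℝ) * dR^(2*(k+1)))
      ≤ 2 * (48*α/dR^2) * ((3:ℝ)/4)^k := by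
  set n : ℕ := k + 1 with hn1
  have hd0 : (0:ℝ) < dR := lt_of_lt_of_le one_pos hdR
  set q : ℝ := 48 * α / dR^2 with hqdef
  have hq0 : 0 ≤ q := by positivity
  have hfpos : (0:ℝ) < (n.factorial : ℝ) := by exact_mod_cast n.factorial_pos
  have hnn : (0:ℝ) < (n:ℝ) := by positivity
  -- step 1 : LHS ≤ q^n * n^n
  have hpow : (4*((k:ℝ)+1))^(2*n) = 16^n * ((n:ℝ)^n) * ((n:ℝ)^n) := by
    have : (4*((k:ℝ)+1)) = 4 * (n:ℝ) := by push_cast [hn1]; ring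
    rw [this, pow_mul]
    rw [show (4*(n:ℝ))^2 = 16 * (n:ℝ)^2 by ring, mul_pow, ← pow_mul, two_mul, pow_add]
    ring
  have hstep1 : α^n * (4*((k:ℝ)+1))^(2*n) / ((n.factorial : ℝ) * dR^(2*n))
      ≤ q^n * (n:ℝ)^n := by
    have hnf : ((n:ℝ))^n ≤ 3^n * n.factorial := pow_le_three_pow_mul_factorial n
    have hdpow : dR^(2*n) = (dR^2)^n := by rw [← pow_mul]
    rw [hpow, hdpow, div_le_iff₀ (by positivity)]
    have hD : ((dR^2)^n : ℝ) ≠ 0 := by positivity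
    have hcancel : q^n * (n:ℝ)^n * ((n.factorial:ℝ) * (dR^2)^n)
        = 48^n * α^n * (n:ℝ)^n * (n.factorial:ℝ) := by
      rw [hqdef, div_pow, mul_pow]
      field_simp
    rw [hcancel]
    calc α^n * (16^n * (n:ℝ)^n * (n:ℝ)^n)
        = (α^n * 16^n * (n:ℝ)^n) * (n:ℝ)^n := by ring
      _ ≤ (α^n * 16^n * (n:ℝ)^n) * (3^n * n.factorial) :=
          mul_le_mul_of_nonneg_left hnf (by positivity)
      _ = 48^n * α^n * (n:ℝ)^n * (n.factorial:ℝ) := by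
          rw [show (48:ℝ)^n = 16^n * 3^n by rw [← mul_pow]; norm_num]
          ring
  -- step 2 : q^n * n^n ≤ 2*q*(3/4)^k
  have hnN : (n:ℝ) ≤ (N:ℝ) := by exact_mod_cast hn
  have hqN : q * N ≤ 1/2 := hq
  have hstep2 : q^n * (n:ℝ)^n ≤ 2 * q * ((3:ℝ)/4)^k := by
    have e1 : q^n * (n:ℝ)^n = (q * (q*(n:ℝ))^k) * (n:ℝ) := by
      rw [hn1, pow_succ, pow_succ, mul_pow]
      ring
    have e2 : (q*(n:ℝ))^k ≤ (q*(N:ℝ))^k :=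
      pow_le_pow_left₀ (by positivity) (mul_le_mul_of_nonneg_left hnN hq0) k
    have e3 : (n:ℝ) ≤ 2 * ((3:ℝ)/2)^k := by
      rw [hn1]; push_cast
      exact nat_le_geom k
    have e2' : (q*(N:ℝ))^k ≤ ((1:ℝ)/2)^k := pow_le_pow_left₀ (by positivity) hqN k
    have e4 : q * (q*(n:ℝ))^k * (n:ℝ) ≤ q * ((1:ℝ)/2)^k * (2 * ((3:ℝ)/2)^k) := by
      have t1 : q * (q*(n:ℝ))^k ≤ q * ((1:ℝ)/2)^k :=
        mul_le_mul_of_nonneg_left (e2.trans e2') hq0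
      have t2 : (0:ℝ) ≤ q * ((1:ℝ)/2)^k := by positivity
      calc q * (q*(n:ℝ))^k * (n:ℝ) ≤ q * ((1:ℝ)/2)^k * (n:ℝ) :=
            mul_le_mul_of_nonneg_right t1 hnn.le
        _ ≤ q * ((1:ℝ)/2)^k * (2 * ((3:ℝ)/2)^k) := mul_le_mul_of_nonneg_left e3 t2
    have e5 : q * ((1:ℝ)/2)^k * (2 * ((3:ℝ)/2)^k) = 2 * q * ((3:ℝ)/4)^k := by
      rw [show ((3:ℝ)/4)^k = ((1:ℝ)/2)^k * ((3:ℝ)/2)^k by rw [← mul_pow]; norm_num]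
      ring
    calc q^n * (n:ℝ)^n = q * (q*(n:ℝ))^k * (n:ℝ) := e1
      _ ≤ q * ((1:ℝ)/2)^k * (2 * ((3:ℝ)/2)^k) := e4
      _ = 2 * q * ((3:ℝ)/4)^k := e5
  exact hstep1.trans hstep2

lemma rem_bound (c : ℝ) (hc1 : 1 ≤ c) (N : ℕ) (hN : 8*c ≤ N) :
    c^N * Real.exp c / N.factorial ≤ Real.exp (-(7*c)) := by
  have hc0 : 0 < c := lt_of_lt_of_le one_pos hc1
  have hNf : (0:ℝ) < (N.factorial : ℝ) := by exact_mod_cast N.factorial_pos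
  have h1 : c^N ≤ ((N:ℝ)/8)^N := pow_le_pow_left₀ hc0.le (by linarith) N
  have h2 : ((N:ℝ))^N ≤ Real.exp N * N.factorial := pow_le_exp_mul_factorial N
  have he2 : (Real.exp 1)^2 ≤ 8 := by
    have h1 : Real.exp 1 ≤ 2.8 := le_trans Real.exp_one_lt_d9.le (by norm_num)
    nlinarith [Real.exp_pos 1]
  have key : c^N / N.factorial ≤ Real.exp (-(N:ℝ)) := by
    have e1 : c^N / N.factorial ≤ ((N:ℝ)/8)^N / N.factorial :=
      div_le_div_of_nonneg_right h1 hNf.le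
    have e2 : ((N:ℝ)/8)^N / N.factorial = (N:ℝ)^N / (8^N * N.factorial) := by
      rw [div_pow]; ring
    have e3 : (N:ℝ)^N / (8^N * N.factorial) ≤ (Real.exp N * N.factorial) / (8^N * N.factorial) :=
      div_le_div_of_nonneg_right h2 (by positivity)
    have e4 : (Real.exp N * N.factorial) / (8^N * N.factorial) = Real.exp N / 8^N := by
      field_simp
    have e5 : Real.exp (N:ℝ) / 8^N ≤ Real.exp (N:ℝ) / ((Real.exp 1)^2)^N := by
      apply div_le_div_of_nonneg_left (Real.exp_pos _).le ?_ ?_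
      · positivity
      · exact pow_le_pow_left₀ (by positivity) he2 N
    have e6 : Real.exp (N:ℝ) / ((Real.exp 1)^2)^N = Real.exp (-(N:ℝ)) := by
      rw [← pow_mul, Real.exp_one_pow, ← Real.exp_sub]
      congr 1
      push_cast
      ring
    calc c^N / N.factorial ≤ ((N:ℝ)/8)^N / N.factorial := e1
      _ = (N:ℝ)^N / (8^N * N.factorial) := e2
      _ ≤ (Real.exp N * N.factorial) / (8^N * N.factorial) := e3
      _ = Real.exp N / 8^N := e4
      _ ≤ Real.exp (N:ℝ) / ((Real.exp 1)^2)^N := e5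
      _ = Real.exp (-(N:ℝ)) := e6
  have final : Real.exp (-(N:ℝ)) * Real.exp c ≤ Real.exp (-(7*c)) := by
    rw [← Real.exp_add]
    apply Real.exp_le_exp.2
    linarith
  calc c^N * Real.exp c / N.factorial = (c^N / N.factorial) * Real.exp c := by ring
    _ ≤ Real.exp (-(N:ℝ)) * Real.exp c :=
        mul_le_mul_of_nonneg_right key (Real.exp_pos _).le
    _ ≤ Real.exp (-(7*c)) := final

end LightMGF5

/-- There are `C > 0` and `d₀` such that for all `d ≥ d₀` and every unit vector `u`:
if `v` is uniform on the sphere and `α = d^{9/8}`, then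
`E[exp(min(α·(u·v)⁴, α·d^{−1/2}))] ≤ 1 + C·α/d²`. -/
theorem light_mgf_bound :
    ∃ C : ℝ, 0 < C ∧ ∃ d₀ : ℕ, ∀ d : ℕ, d₀ ≤ d →
      ∀ u : EuclideanSpace ℝ (Fin d), ‖u‖ = 1 →
        (∫ v, Real.exp (min ((d : ℝ) ^ ((9 : ℝ) / 8) * (∑ k, u k * v k) ^ 4)
              ((d : ℝ) ^ ((9 : ℝ) / 8) * (d : ℝ) ^ (-(1 : ℝ) / 2)))
            ∂(uniformSphere d)) ≤
          1 + C * (d : ℝ) ^ ((9 : ℝ) / 8) / (d : ℝ) ^ 2 := by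
  classical
  refine ⟨400, by norm_num, 10^12, fun d hd u hu => ?_⟩
  have hd1 : 1 ≤ d := le_trans (by norm_num) hd
  have hdR : (1:ℝ) ≤ (d:ℝ) := by exact_mod_cast hd1
  have hd0 : (0:ℝ) < d := by linarith
  have hdbig : ((10^12 : ℕ) : ℝ) ≤ (d:ℝ) := by exact_mod_cast hd
  haveI hprob : IsProbabilityMeasure (uniformSphere d) :=
    LightMGF3.uniformSphere_isProbability hd1
  have hX : ∀ v : EuclideanSpace ℝ (Fin d), (∑ k, u k * v k) = (inner ℝ u v : ℝ) := by
    intro v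
    rw [PiLp.inner_apply]
    refine Finset.sum_congr rfl fun k _ => ?_
    simp [RCLike.inner_apply]
    ring
  simp only [hX]
  set α := (d:ℝ) ^ ((9:ℝ)/8) with hαdef
  set c := (d:ℝ) ^ ((5:ℝ)/8) with hcdef
  have hα0 : (0:ℝ) < α := Real.rpow_pos_of_pos hd0 _
  have hc1 : (1:ℝ) ≤ c := by
    have h := Real.rpow_le_rpow_of_exponent_le hdR (show (0:ℝ) ≤ (5:ℝ)/8 by norm_num)
    rwa [Real.rpow_zero] at h
  have hc0 : (0:ℝ) < c := lt_of_lt_of_le one_pos hc1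
  have hcap : α * (d:ℝ) ^ (-(1:ℝ)/2) = c := by
    rw [hαdef, hcdef, ← Real.rpow_add hd0]; norm_num
  set N := ⌈(8:ℝ) * c⌉₊ with hNdef
  have hN8 : 8 * c ≤ (N:ℝ) := Nat.le_ceil _
  have hN9 : (N:ℝ) ≤ 9 * c := by
    have h := Nat.ceil_lt_add_one (show (0:ℝ) ≤ 8*c by positivity)
    linarith
  obtain ⟨N', hN'⟩ : ∃ N', N = N' + 1 := by
    have h1 : (1:ℝ) ≤ (N:ℝ) := by linarith
    have : 1 ≤ N := by exact_mod_cast h1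
    exact ⟨N - 1, by omega⟩
  -- pointwise bound
  have hpt : ∀ v : EuclideanSpace ℝ (Fin d),
      Real.exp (min (α * (inner ℝ u v : ℝ)^4) (α * (d:ℝ)^(-(1:ℝ)/2)))
        ≤ (∑ n ∈ Finset.range N, (α * (inner ℝ u v : ℝ)^4)^n / n.factorial)
          + c^N * Real.exp c / N.factorial := by
    intro v
    rw [hcap]
    exact LightMGF4.exp_min_le (by positivity) hc0.le N
  have hcont : Continuous (fun v : EuclideanSpace ℝ (Fin d) => (inner ℝ u v : ℝ)) :=
    continuous_const.inner continuous_id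
  have hXb : ∀ᵐ v ∂(uniformSphere d), |(inner ℝ u v : ℝ)| ≤ 1 := by
    filter_upwards [LightMGF3.ae_norm_one (d := d)] with v hv
    have h := norm_inner_le_norm (𝕜 := ℝ) u v
    rw [hu, hv, one_mul, Real.norm_eq_abs] at h
    exact h
  have hint_term : ∀ n : ℕ,
      Integrable (fun v => (α * (inner ℝ u v : ℝ)^4)^n / n.factorial) (uniformSphere d) := by
    intro n
    refine Integrable.mono' (integrable_const (α^n / n.factorial)) ?_ ?_
    · exact (((continuous_const.mul (hcont.pow 4))).pow n |>.div_const _).aestronglyMeasurable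
    · filter_upwards [hXb] with v hv
      have h4 : (inner ℝ u v : ℝ)^4 ≤ 1 := by
        calc (inner ℝ u v : ℝ)^4 = |(inner ℝ u v : ℝ)|^4 := by
              rw [← abs_pow, abs_of_nonneg (by positivity)]
          _ ≤ 1 := pow_le_one₀ (abs_nonneg _) hv
      have h5 : (0:ℝ) ≤ α * (inner ℝ u v : ℝ)^4 := by positivity
      have h6 : (α * (inner ℝ u v:ℝ)^4)^n ≤ α^n := by
        calc (α * (inner ℝ u v:ℝ)^4)^n ≤ (α * 1)^n :=
              pow_le_pow_left₀ h5 (by nlinarith) n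
          _ = α^n := by rw [mul_one]
      rw [Real.norm_eq_abs, abs_div, abs_of_nonneg (pow_nonneg h5 n),
        abs_of_nonneg (show (0:ℝ) ≤ (n.factorial : ℝ) by positivity)]
      exact div_le_div_of_nonneg_right h6 (by positivity)
  have hint_sum : Integrable
      (fun v => ∑ n ∈ Finset.range N, (α * (inner ℝ u v : ℝ)^4)^n / n.factorial)
      (uniformSphere d) := by
    apply integrable_finset_sum
    intro n _
    exact hint_term n
  have hint_lhs : Integrable (fun v : EuclideanSpace ℝ (Fin d) =>
      Real.exp (min (α * (inner ℝ u v : ℝ)^4) (α * (d:ℝ)^(-(1:ℝ)/2)))) (uniformSphere d) := by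
    refine Integrable.mono' (integrable_const (Real.exp c)) ?_ ?_
    · exact (Real.continuous_exp.comp
        ((continuous_const.mul (hcont.pow 4)).min continuous_const)).aestronglyMeasurable
    · refine Filter.Eventually.of_forall fun v => ?_
      rw [Real.norm_eq_abs, abs_of_nonneg (Real.exp_pos _).le, Real.exp_le_exp, hcap]
      exact min_le_right _ _
  have hbig := integral_mono hint_lhs (hint_sum.add (integrable_const _)) hpt
  simp only [Pi.add_apply] at hbig
  rw [integral_add hint_sum (integrable_const _), integral_const, probReal_univ,
    smul_eq_mul, one_mul,
    integral_finset_sum _ (fun n _ => hint_term n)] at hbig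
  -- term values
  have hterm_eq : ∀ n : ℕ,
      ∫ v, (α * (inner ℝ u v : ℝ)^4)^n / n.factorial ∂(uniformSphere d)
      = (α^n / n.factorial) * ∫ v, (inner ℝ u v : ℝ)^(2*(2*n)) ∂(uniformSphere d) := by
    intro n
    rw [← integral_const_mul]
    congr 1
    funext v
    rw [show (2*(2*n)) = 4*n from by ring, pow_mul, mul_pow]
    ring
  have hmom : ∀ i : ℕ,
      ∫ v, (inner ℝ u v : ℝ)^(2*(2*(i+1))) ∂(uniformSphere d)
        ≤ (4*((i:ℝ)+1))^(2*(i+1)) / (d:ℝ)^(2*(i+1)) := by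
    intro i
    have h := LightMGF3.moment_le hd1 u hu (2*(i+1))
    have hb : (2*((2*(i+1) : ℕ):ℝ)) = 4*((i:ℝ)+1) := by push_cast; ring
    rwa [hb] at h
  have ht0 : ∫ v, (α * (inner ℝ u v : ℝ)^4)^0 / Nat.factorial 0 ∂(uniformSphere d) = 1 := by
    simp
  set q : ℝ := 48 * α / (d:ℝ)^2 with hqdef
  have hq0 : (0:ℝ) ≤ q := by positivity
  have hd14 : (1000:ℝ) ≤ (d:ℝ)^((1:ℝ)/4) := by
    have h1 : ((1000:ℝ)^(4:ℕ)) ≤ (d:ℝ) := by norm_num at hdbig ⊢; linarith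
    calc (1000:ℝ) = (((1000:ℝ)^(4:ℕ)))^((1:ℝ)/4) := by
          rw [← Real.rpow_natCast (1000:ℝ) 4, ← Real.rpow_mul (by norm_num)]
          norm_num
      _ ≤ (d:ℝ)^((1:ℝ)/4) := Real.rpow_le_rpow (by positivity) h1 (by norm_num)
  have hαc : α * c = (d:ℝ)^((7:ℝ)/4) := by
    rw [hαdef, hcdef, ← Real.rpow_add hd0]; norm_num
  have hd2 : ((d:ℝ)^2) = (d:ℝ)^((2:ℝ)) := by
    rw [← Real.rpow_natCast (d:ℝ) 2]; norm_num
  have hsmall : α * c / (d:ℝ)^2 * (d:ℝ)^((1:ℝ)/4) = 1 := by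
    rw [hαc, hd2, ← Real.rpow_sub hd0, ← Real.rpow_add hd0]
    norm_num
  have hac_small : α * c / (d:ℝ)^2 ≤ 1/1000 := by
    have heq : α * c / (d:ℝ)^2 = ((d:ℝ)^((1:ℝ)/4))⁻¹ :=
      eq_inv_of_mul_eq_one_left hsmall
    rw [heq]
    have h := inv_anti₀ (show (0:ℝ) < 1000 by norm_num) hd14
    linarith
  have hqN : 48 * α / (d:ℝ)^2 * (N:ℝ) ≤ 1/2 := by
    have h1 : q * (N:ℝ) ≤ q * (9*c) := mul_le_mul_of_nonneg_left hN9 hq0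
    have h2 : q * (9*c) = 432 * (α * c / (d:ℝ)^2) := by rw [hqdef]; ring
    have h3 : (432:ℝ) * (α * c / (d:ℝ)^2) ≤ 432 * (1/1000) := by linarith
    calc 48 * α / (d:ℝ)^2 * (N:ℝ) = q * N := by rw [hqdef]
      _ ≤ 432 * (1/1000) := by linarith
      _ ≤ 1/2 := by norm_num
  have hsum_le : ∑ n ∈ Finset.range N,
      ∫ v, (α * (inner ℝ u v : ℝ)^4)^n / n.factorial ∂(uniformSphere d)
      ≤ 1 + 8 * q := by
    rw [hN', Finset.sum_range_succ', ht0]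
    have hterms : ∑ i ∈ Finset.range N',
        ∫ v, (α * (inner ℝ u v:ℝ)^4)^(i+1)/(i+1).factorial ∂(uniformSphere d)
        ≤ ∑ i ∈ Finset.range N', 2 * q * ((3:ℝ)/4)^i := by
      refine Finset.sum_le_sum fun i hi => ?_
      have hiN : i + 1 ≤ N := by
        have := Finset.mem_range.mp hi
        omega
      calc ∫ v, (α * (inner ℝ u v:ℝ)^4)^(i+1)/(i+1).factorial ∂(uniformSphere d)
          = (α^(i+1)/((i+1).factorial : ℝ))
              * ∫ v, (inner ℝ u v:ℝ)^(2*(2*(i+1))) ∂(uniformSphere d) := hterm_eq (i+1)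
        _ ≤ (α^(i+1)/((i+1).factorial : ℝ))
              * ((4*((i:ℝ)+1))^(2*(i+1)) / (d:ℝ)^(2*(i+1))) := by
            apply mul_le_mul_of_nonneg_left (hmom i) (by positivity)
        _ = α^(i+1) * (4*((i:ℝ)+1))^(2*(i+1))
              / (((i+1).factorial:ℝ) * (d:ℝ)^(2*(i+1))) := by ring
        _ ≤ 2 * (48*α/(d:ℝ)^2) * ((3:ℝ)/4)^i :=
            LightMGF5.term_bound α (d:ℝ) hα0.le hdR i N hiN hqN
        _ = 2 * q * ((3:ℝ)/4)^i := by rw [hqdef]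
    have hgeom : ∑ i ∈ Finset.range N', 2*q*((3:ℝ)/4)^i ≤ 2*q*4 := by
      rw [← Finset.mul_sum]
      exact mul_le_mul_of_nonneg_left (LightMGF5.geom_le N') (by positivity)
    linarith
  have hrem : c^N * Real.exp c / N.factorial ≤ α / (d:ℝ)^2 := by
    refine (LightMGF5.rem_bound c hc1 N hN8).trans ?_
    have hratio : α / (d:ℝ)^2 = (d:ℝ)^(-((7:ℝ)/8)) := by
      rw [hαdef, hd2, ← Real.rpow_sub hd0]
      norm_num
    rw [hratio]
    have h78 : (d:ℝ)^((7:ℝ)/8) ≤ Real.exp (7*c) := by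
      have e1 : (d:ℝ)^((7:ℝ)/8) ≤ (d:ℝ)^((5:ℝ)/4) :=
        Real.rpow_le_rpow_of_exponent_le hdR (by norm_num)
      have e2 : (d:ℝ)^((5:ℝ)/4) = c^2 := by
        rw [hcdef, ← Real.rpow_natCast ((d:ℝ)^((5:ℝ)/8)) 2, ← Real.rpow_mul hd0.le]
        norm_num
      have e3 : c ≤ Real.exp (7*c/2) := by
        have := Real.add_one_le_exp (7*c/2)
        linarith
      have e4 : c^2 ≤ Real.exp (7*c) := by
        calc c^2 ≤ (Real.exp (7*c/2))^2 := pow_le_pow_left₀ hc0.le e3 2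
          _ = Real.exp (7*c) := by
              rw [← Real.exp_nat_mul]
              congr 1
              push_cast
              ring
      linarith [e1, e2, e4, e2 ▸ e4]
    rw [Real.rpow_neg hd0.le, Real.exp_neg]
    exact inv_anti₀ (Real.rpow_pos_of_pos hd0 _) h78
  have h8 : 8*q = 384*(α/(d:ℝ)^2) := by rw [hqdef]; ring
  have hδ : (0:ℝ) ≤ α/(d:ℝ)^2 := by positivity
  have hrw : (400:ℝ) * α / (d:ℝ)^2 = 400 * (α/(d:ℝ)^2) := by ring
  rw [hrw]
  linarith [hbig, hsum_le, hrem]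
end
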